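/- arXiv:0805.4220 — 5 statements merged into one kernel-verified Lean document; each statement's English description precedes it below -/
import Mathlib

section
/- For any tensor T ∈ F^{m1×m2×m3}, the minimization problem min over rank-at-most-1 tensors X of ‖T−X‖ attains its minimum, i.e., there exists a rank-at-most-1 tensor X* with ‖T−X*‖ = inf over all rank-at-most-1 tensors X of ‖T−X‖. -/
lemma euclid_coord_le_norm {𝕜 : Type*} [RCLike 𝕜] {ι : Type*} [Fintype ι]
    (x : EuclideanSpace 𝕜 ι) (i : ι) : ‖x i‖ ≤ ‖x‖ := by
  rw [EuclideanSpace.norm_eq]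
  have h1 : ‖x i‖ = Real.sqrt (‖x i‖ ^ 2) := by
    rw [Real.sqrt_sq (norm_nonneg _)]
  rw [h1]
  apply Real.sqrt_le_sqrt
  exact Finset.single_le_sum (f := fun j => ‖x j‖ ^ 2) (fun j _ => by positivity)
    (Finset.mem_univ i)

set_option maxHeartbeats 1000000 in
/-- Best rank-one approximation always exists: for any `T ∈ 𝕜^{m₁×m₂×m₃}` there is a
rank-at-most-1 tensor `X*` with `‖T - X*‖ = inf {‖T - X‖ : X of rank ≤ 1}`,
with respect to the Hilbert–Schmidt norm. -/
theorem best_rank_one_approximation_exists (𝕜 : Type*) [RCLike 𝕜] (m₁ m₂ m₃ : ℕ)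
    (T : EuclideanSpace 𝕜 (Fin m₁ × Fin m₂ × Fin m₃)) :
    ∃ X : EuclideanSpace 𝕜 (Fin m₁ × Fin m₂ × Fin m₃),
      (∃ (u : Fin m₁ → 𝕜) (v : Fin m₂ → 𝕜) (w : Fin m₃ → 𝕜),
        ∀ i j k, X (i, j, k) = u i * v j * w k) ∧
      ‖T - X‖ = ⨅ Y : {Y : EuclideanSpace 𝕜 (Fin m₁ × Fin m₂ × Fin m₃) |
          ∃ (u : Fin m₁ → 𝕜) (v : Fin m₂ → 𝕜) (w : Fin m₃ → 𝕜),
            ∀ i j k, Y (i, j, k) = u i * v j * w k}, ‖T - (Y : EuclideanSpace 𝕜 (Fin m₁ × Fin m₂ × Fin m₃))‖ := by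
  classical
  set S := {Y : EuclideanSpace 𝕜 (Fin m₁ × Fin m₂ × Fin m₃) | ∃ (u : Fin m₁ → 𝕜) (v : Fin m₂ → 𝕜) (w : Fin m₃ → 𝕜),
      ∀ i j k, Y (i, j, k) = u i * v j * w k} with hS
  set R : ℝ := 2 * ‖T‖ + 1 with hRdef
  have hR0 : (0:ℝ) ≤ R := by positivity
  set φ : ((Fin m₁ → 𝕜) × (Fin m₂ → 𝕜) × (Fin m₃ → 𝕜)) → EuclideanSpace 𝕜 (Fin m₁ × Fin m₂ × Fin m₃) :=
    fun p => (WithLp.equiv 2 _).symm (fun x => p.1 x.1 * p.2.1 x.2.1 * p.2.2 x.2.2) with hφ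
  have hφ_apply : ∀ p i j k, φ p (i, j, k) = p.1 i * p.2.1 j * p.2.2 k := fun p i j k => rfl
  have hφ_cont : Continuous φ := by
    apply (PiLp.continuous_toLp 2 _).comp
    apply continuous_pi
    intro x
    exact (((continuous_apply x.1).comp continuous_fst).mul
      ((continuous_apply x.2.1).comp (continuous_fst.comp continuous_snd))).mul
      ((continuous_apply x.2.2).comp (continuous_snd.comp continuous_snd))
  set K : Set ((Fin m₁ → 𝕜) × (Fin m₂ → 𝕜) × (Fin m₃ → 𝕜)) :=
    Metric.closedBall 0 1 ×ˢ (Metric.closedBall 0 1 ×ˢ Metric.closedBall 0 R) with hK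
  have hKcompact : IsCompact K :=
    (isCompact_closedBall _ _).prod ((isCompact_closedBall _ _).prod (isCompact_closedBall _ _))
  have h0K : (0, 0, 0) ∈ K := by
    refine ⟨?_, ?_, ?_⟩ <;> simp [hR0]
  have hφ0 : φ (0, 0, 0) = 0 := by
    apply PiLp.ext
    rintro ⟨i, j, k⟩
    show (0:𝕜) * 0 * 0 = (0 : EuclideanSpace 𝕜 (Fin m₁ × Fin m₂ × Fin m₃)) (i, j, k)
    simp
  have hC : IsCompact (φ '' K) := hKcompact.image hφ_cont
  have hCne : (φ '' K).Nonempty := ⟨φ (0,0,0), ⟨(0,0,0), h0K, rfl⟩⟩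
  have hCS : φ '' K ⊆ S := by
    rintro _ ⟨p, -, rfl⟩
    exact ⟨p.1, p.2.1, p.2.2, fun i j k => rfl⟩
  -- the key rescaling claim
  have key : ∀ Y ∈ S, ‖Y‖ ≤ R → Y ∈ φ '' K := by
    rintro Y ⟨u, v, w, h⟩ hYR
    by_cases hu : u = 0
    · refine ⟨(0,0,0), h0K, ?_⟩
      rw [hφ0]
      apply PiLp.ext; rintro ⟨i, j, k⟩
      show (0 : EuclideanSpace 𝕜 (Fin m₁ × Fin m₂ × Fin m₃)) (i,j,k) = Y (i,j,k)
      rw [h i j k, hu]; simp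
    by_cases hv : v = 0
    · refine ⟨(0,0,0), h0K, ?_⟩
      rw [hφ0]
      apply PiLp.ext; rintro ⟨i, j, k⟩
      show (0 : EuclideanSpace 𝕜 (Fin m₁ × Fin m₂ × Fin m₃)) (i,j,k) = Y (i,j,k)
      rw [h i j k, hv]; simp
    · -- u ≠ 0, v ≠ 0
      obtain ⟨i₀, hi₀⟩ := Function.ne_iff.mp hu
      obtain ⟨j₀, hj₀⟩ := Function.ne_iff.mp hv
      haveI : Nonempty (Fin m₁) := ⟨i₀⟩
      haveI : Nonempty (Fin m₂) := ⟨j₀⟩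
      obtain ⟨i, hi⟩ := Finite.exists_max (fun i => ‖u i‖)
      obtain ⟨j, hj⟩ := Finite.exists_max (fun j => ‖v j‖)
      have hui : u i ≠ 0 := by
        intro h0
        have := hi i₀
        rw [h0] at this
        simp at this
        exact hi₀ (by simpa using norm_le_zero_iff.mp (by simpa using this))
      have hvj : v j ≠ 0 := by
        intro h0
        have := hj j₀
        rw [h0] at this
        simp at this
        exact hj₀ (by simpa using norm_le_zero_iff.mp (by simpa using this))
      refine ⟨((u i)⁻¹ • u, (v j)⁻¹ • v, (u i * v j) • w), ⟨?_, ?_, ?_⟩, ?_⟩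
      · rw [Metric.mem_closedBall, dist_zero_right]
        rw [pi_norm_le_iff_of_nonneg (by norm_num)]
        intro a
        simp only [Pi.smul_apply, smul_eq_mul, norm_mul, norm_inv]
        rw [inv_mul_le_iff₀ (norm_pos_iff.mpr hui)]
        simpa using hi a
      · rw [Metric.mem_closedBall, dist_zero_right]
        rw [pi_norm_le_iff_of_nonneg (by norm_num)]
        intro b
        simp only [Pi.smul_apply, smul_eq_mul, norm_mul, norm_inv]
        rw [inv_mul_le_iff₀ (norm_pos_iff.mpr hvj)]
        simpa using hj b
      · rw [Metric.mem_closedBall, dist_zero_right]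
        rw [pi_norm_le_iff_of_nonneg hR0]
        intro k
        show ‖u i * v j * w k‖ ≤ R
        rw [← h i j k]
        exact le_trans (euclid_coord_le_norm Y (i,j,k)) hYR
      · apply PiLp.ext; rintro ⟨a, b, c⟩
        rw [hφ_apply]
        show (u i)⁻¹ * u a * ((v j)⁻¹ * v b) * (u i * v j * w c) = Y (a, b, c)
        rw [h a b c]
        field_simp
  -- get the minimizer on the compact set
  obtain ⟨X, hXC, hXmin⟩ := hC.exists_isMinOn hCne (continuous_norm.comp
    (continuous_const.sub continuous_id)).continuousOn (f := fun Z : EuclideanSpace 𝕜 (Fin m₁ × Fin m₂ × Fin m₃) => ‖T - Z‖)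
  have hXS : X ∈ S := hCS hXC
  have hmin : ∀ Y ∈ S, ‖T - X‖ ≤ ‖T - Y‖ := by
    intro Y hY
    by_cases hYR : ‖Y‖ ≤ R
    · exact hXmin (key Y hY hYR)
    · push_neg at hYR
      calc ‖T - X‖ ≤ ‖T - φ (0,0,0)‖ := hXmin ⟨(0,0,0), h0K, rfl⟩
        _ = ‖T‖ := by rw [hφ0, sub_zero]
        _ ≤ ‖Y‖ - ‖T‖ := by rw [hRdef] at hYR; linarith
        _ ≤ ‖T - Y‖ := le_trans (norm_sub_norm_le Y T) (le_of_eq (norm_sub_rev Y T))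
  refine ⟨X, hXS, ?_⟩
  haveI : Nonempty S := ⟨⟨X, hXS⟩⟩
  apply le_antisymm
  · refine le_ciInf ?_
    rintro ⟨Y, hY⟩
    exact hmin Y hY
  · refine ciInf_le ⟨0, ?_⟩ (⟨X, hXS⟩ : S)
    rintro r ⟨Y, rfl⟩
    exact norm_nonneg _
end

section
/- Let B ∈ ℝ^{m×m} be symmetric and define g_B on the Stiefel manifold Fr(i,ℝ^m) of orthonormal i-frames by g_B(x_1,…,x_i) = Σ_{l=1}^i x_l^⊤ B x_l. Then (x_1,…,x_i) is a critical point of g_B if and only if span(x_1,…,x_i) contains i linearly independent eigenvectors of B, i.e., span(x_1,…,x_i) is an invariant subspace of B. -/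
open Matrix
/-- An orthonormal `i`-frame in `ℝ^m` (a point of the Stiefel manifold `Fr(i,ℝ^m)`). -/
def IsOrthonormalFrame {m i : ℕ} (x : Fin i → Fin m → ℝ) : Prop :=
  ∀ s t, x s ⬝ᵥ x t = if s = t then (1 : ℝ) else 0

/-- `x` is a critical point of `f` on the Stiefel manifold `Fr(i,ℝ^m)`: along every
differentiable curve of orthonormal frames through `x`, the derivative of `f` vanishes. -/
def StiefelCritical {m i : ℕ} (f : (Fin i → Fin m → ℝ) → ℝ) (x : Fin i → Fin m → ℝ) : Prop :=
  ∀ c : ℝ → (Fin i → Fin m → ℝ),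
    (∀ l j, Differentiable ℝ fun t => c t l j) →
    c 0 = x → (∀ t, IsOrthonormalFrame (c t)) →
    deriv (fun t => f (c t)) 0 = 0



lemma dot_sum_smul {m k : ℕ} (v : Fin m → ℝ) (c : Fin k → ℝ) (w : Fin k → Fin m → ℝ) :
    v ⬝ᵥ (∑ s, c s • w s) = ∑ s, c s * (v ⬝ᵥ w s) := by
  simp only [dotProduct, Finset.sum_apply, Pi.smul_apply, smul_eq_mul, Finset.mul_sum]
  rw [Finset.sum_comm]
  exact Finset.sum_congr rfl fun s _ => Finset.sum_congr rfl fun j _ => by ring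

lemma sum_smul_dot {m k : ℕ} (v : Fin m → ℝ) (c : Fin k → ℝ) (w : Fin k → Fin m → ℝ) :
    (∑ s, c s • w s) ⬝ᵥ v = ∑ s, c s * (w s ⬝ᵥ v) := by
  rw [dotProduct_comm, dot_sum_smul]
  exact Finset.sum_congr rfl fun s _ => by rw [dotProduct_comm]

lemma symm_dot {m : ℕ} {B : Matrix (Fin m) (Fin m) ℝ} (hB : B.IsSymm) (u v : Fin m → ℝ) :
    (B.mulVec u) ⬝ᵥ v = u ⬝ᵥ B.mulVec v := by
  rw [dotProduct_comm, dotProduct_mulVec, ← Matrix.mulVec_transpose, hB.eq, dotProduct_comm]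

lemma dot_deriv {m : ℕ} {f g : ℝ → Fin m → ℝ} {f' g' : Fin m → ℝ} {t : ℝ}
    (hf : ∀ j, HasDerivAt (fun s => f s j) (f' j) t)
    (hg : ∀ j, HasDerivAt (fun s => g s j) (g' j) t) :
    HasDerivAt (fun s => f s ⬝ᵥ g s) (f' ⬝ᵥ g t + f t ⬝ᵥ g') t := by
  have h : HasDerivAt (fun s => ∑ j, f s j * g s j)
      (∑ j, (f' j * g t j + f t j * g' j)) t :=
    HasDerivAt.fun_sum fun j _ => (hf j).mul (hg j)
  simpa [dotProduct, Finset.sum_add_distrib] using h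

lemma quad_deriv {m : ℕ} (B : Matrix (Fin m) (Fin m) ℝ) {f : ℝ → Fin m → ℝ} {f' : Fin m → ℝ} {t : ℝ}
    (hf : ∀ j, HasDerivAt (fun s => f s j) (f' j) t) :
    HasDerivAt (fun s => f s ⬝ᵥ B.mulVec (f s)) (f' ⬝ᵥ B.mulVec (f t) + f t ⬝ᵥ B.mulVec f') t := by
  refine dot_deriv hf fun j => ?_
  have h : HasDerivAt (fun s => ∑ k, B j k * f s k) (∑ k, B j k * f' k) t :=
    HasDerivAt.fun_sum fun k _ => (hf k).const_mul (B j k)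
  simpa [mulVec, dotProduct] using h

lemma dot_orthonormal_li {m i : ℕ} (x : Fin i → Fin m → ℝ)
    (hx : ∀ s t, x s ⬝ᵥ x t = if s = t then (1:ℝ) else 0) : LinearIndependent ℝ x := by
  rw [Fintype.linearIndependent_iff]
  intro g hg l
  have h := congrArg (fun v => x l ⬝ᵥ v) hg
  simp only [dot_sum_smul, dotProduct_zero] at h
  rw [Finset.sum_eq_single l (fun b _ hb => by rw [hx l b, if_neg (Ne.symm hb), mul_zero])
    (fun h => absurd (Finset.mem_univ l) h)] at h
  rw [hx l l, if_pos rfl, mul_one] at h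
  exact h

lemma critical_orth {m i : ℕ} {B : Matrix (Fin m) (Fin m) ℝ} (hB : B.IsSymm)
    {x : Fin i → Fin m → ℝ} (hx : IsOrthonormalFrame x)
    (hcrit : StiefelCritical (fun y => ∑ l, y l ⬝ᵥ B.mulVec (y l)) x)
    (l : Fin i) (w : Fin m → ℝ) (hw : ∀ s, w ⬝ᵥ x s = 0) :
    (B.mulVec (x l)) ⬝ᵥ w = 0 := by
  by_cases hw0 : w ⬝ᵥ w = 0
  · rw [dotProduct_self_eq_zero.mp hw0, dotProduct_zero]
  · have hpos : 0 < w ⬝ᵥ w := by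
      refine lt_of_le_of_ne (Finset.sum_nonneg fun j _ => mul_self_nonneg _) (Ne.symm hw0)
    set r := Real.sqrt (w ⬝ᵥ w) with hr_def
    have hr : 0 < r := Real.sqrt_pos.mpr hpos
    have hr2 : r * r = w ⬝ᵥ w := Real.mul_self_sqrt hpos.le
    set u : Fin m → ℝ := r⁻¹ • w with hu_def
    have huu : u ⬝ᵥ u = 1 := by
      simp only [hu_def, smul_dotProduct, dotProduct_smul, smul_eq_mul]
      field_simp
      nlinarith [hr2]
    have hus : ∀ s, u ⬝ᵥ x s = 0 := by
      intro s; simp [hu_def, smul_dotProduct, hw s]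
    have hsu : ∀ s, x s ⬝ᵥ u = 0 := fun s => by rw [dotProduct_comm]; exact hus s
    set c : ℝ → Fin i → Fin m → ℝ := fun t s =>
      if s = l then Real.cos (r*t) • x l + Real.sin (r*t) • u else x s with hc_def
    have hdiff : ∀ s j, Differentiable ℝ fun t => c t s j := by
      intro s j
      by_cases h : s = l
      · simp only [hc_def, h, if_pos rfl, Pi.add_apply, Pi.smul_apply, smul_eq_mul]
        fun_prop
      · simp only [hc_def, if_neg h]
        exact differentiable_const _
    have h0 : c 0 = x := by
      funext s
      by_cases h : s = l
      · subst h; simp [hc_def]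
      · simp [hc_def, h]
    have horth : ∀ t, IsOrthonormalFrame (c t) := by
      intro t s a
      have hpq : Real.cos (r*t) * Real.cos (r*t) + Real.sin (r*t) * Real.sin (r*t) = 1 := by
        have := Real.sin_sq_add_cos_sq (r*t); nlinarith [this]
      by_cases hs : s = l <;> by_cases ha : a = l
      · rw [hs, ha]
        simp [hc_def, add_dotProduct, dotProduct_add, smul_dotProduct,
          dotProduct_smul, hx l l, huu, hus l, hsu l, smul_eq_mul]
        nlinarith [hpq]
      · rw [hs]
        have hne : (l : Fin i) ≠ a := fun h => ha h.symm
        simp [hc_def, ha, add_dotProduct, smul_dotProduct, hx l a, if_neg hne, hus, smul_eq_mul]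
      · rw [ha]
        have hne : (s : Fin i) ≠ l := hs
        simp [hc_def, hs, dotProduct_add, dotProduct_smul, hx s l, if_neg hne, hsu, smul_eq_mul]
      · simp [hc_def, hs, ha, hx s a]
    set v : Fin i → Fin m → ℝ := fun s => if s = l then r • u else 0 with hv_def
    have hv : ∀ s j, HasDerivAt (fun t => c t s j) (v s j) 0 := by
      intro s j
      have h1 : HasDerivAt (fun t : ℝ => r*t) r 0 := by
        simpa using (hasDerivAt_id (0:ℝ)).const_mul r
      by_cases h : s = l
      · subst h
        simp only [hc_def, if_pos rfl, Pi.add_apply, Pi.smul_apply, smul_eq_mul]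
        have hcos : HasDerivAt (fun t => Real.cos (r*t)) 0 0 := by
          simpa [Function.comp_def] using (Real.hasDerivAt_cos (r*0)).comp 0 h1
        have hsin : HasDerivAt (fun t => Real.sin (r*t)) r 0 := by
          simpa [Function.comp_def] using (Real.hasDerivAt_sin (r*0)).comp 0 h1
        have := (hcos.mul_const (x s j)).fun_add (hsin.mul_const (u j))
        simpa [hv_def] using this
      · simp only [hc_def, if_neg h, hv_def]
        simpa [h] using hasDerivAt_const (0:ℝ) (x s j)
    have hG : HasDerivAt (fun t => ∑ s, c t s ⬝ᵥ B.mulVec (c t s))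
        (∑ s, (v s ⬝ᵥ B.mulVec (x s) + x s ⬝ᵥ B.mulVec (v s))) 0 := by
      have h := HasDerivAt.fun_sum (fun s (_ : s ∈ Finset.univ) => quad_deriv B (hv s))
      have h0s : ∀ s, c 0 s = x s := fun s => congrFun h0 s
      simpa only [h0s] using h
    have hzero := hcrit c hdiff h0 horth
    rw [hG.deriv] at hzero
    rw [Finset.sum_eq_single l
      (fun b _ hb => by simp [hv_def, if_neg hb])
      (fun h => absurd (Finset.mem_univ l) h)] at hzero
    simp only [hv_def, if_pos rfl, smul_dotProduct, Matrix.mulVec_smul, dotProduct_smul,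
      smul_eq_mul] at hzero
    have hud : u ⬝ᵥ B.mulVec (x l) = x l ⬝ᵥ B.mulVec u := by
      rw [dotProduct_comm]; exact symm_dot hB (x l) u
    rw [hud] at hzero
    have hkey : x l ⬝ᵥ B.mulVec u = 0 := by nlinarith [hzero]
    have hwu : w = r • u := by
      rw [hu_def, smul_smul, mul_inv_cancel₀ hr.ne', one_smul]
    rw [hwu, dotProduct_smul, smul_eq_mul, symm_dot hB, hkey, mul_zero]

lemma critical_invariant {m i : ℕ} {B : Matrix (Fin m) (Fin m) ℝ} (hB : B.IsSymm)
    {x : Fin i → Fin m → ℝ} (hx : IsOrthonormalFrame x)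
    (hcrit : StiefelCritical (fun y => ∑ l, y l ⬝ᵥ B.mulVec (y l)) x)
    (l : Fin i) : B.mulVec (x l) ∈ Submodule.span ℝ (Set.range x) := by
  set u0 : Fin m → ℝ := B.mulVec (x l) - ∑ s, (x s ⬝ᵥ B.mulVec (x l)) • x s with hu0
  have hu0x : ∀ s, u0 ⬝ᵥ x s = 0 := by
    intro s
    rw [hu0, sub_dotProduct, sum_smul_dot]
    rw [Finset.sum_eq_single s (fun b _ hb => by rw [hx b s, if_neg hb, mul_zero])
      (fun h => absurd (Finset.mem_univ s) h), hx s s, if_pos rfl, mul_one, dotProduct_comm,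
      sub_self]
  have h1 : (B.mulVec (x l)) ⬝ᵥ u0 = 0 := critical_orth hB hx hcrit l u0 hu0x
  have h2 : u0 ⬝ᵥ u0 = 0 := by
    nth_rewrite 1 [hu0]
    rw [sub_dotProduct, h1, sum_smul_dot, zero_sub, neg_eq_zero]
    exact Finset.sum_eq_zero fun s _ => by rw [dotProduct_comm (x s) u0, hu0x s, mul_zero]
  have h3 : u0 = 0 := dotProduct_self_eq_zero.mp h2
  have h4 : B.mulVec (x l) = ∑ s, (x s ⬝ᵥ B.mulVec (x l)) • x s := by
    have := sub_eq_zero.mp (hu0 ▸ h3)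
    linear_combination (norm := module) this
  rw [h4]
  exact Submodule.sum_mem _ fun s _ =>
    Submodule.smul_mem _ _ (Submodule.subset_span (Set.mem_range_self s))

lemma spectral_part {m i : ℕ} {B : Matrix (Fin m) (Fin m) ℝ} (hB : B.IsSymm)
    {x : Fin i → Fin m → ℝ} (hx : ∀ s t, x s ⬝ᵥ x t = if s = t then (1:ℝ) else 0)
    (hinv : ∀ l, B.mulVec (x l) ∈ Submodule.span ℝ (Set.range x)) :
    ∃ w : Fin i → (Fin m → ℝ),
      LinearIndependent ℝ w ∧
      (∀ l, ∃ μ : ℝ, B.mulVec (w l) = μ • w l) ∧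
      (∀ l, w l ∈ Submodule.span ℝ (Set.range x)) := by
  -- work in EuclideanSpace
  let E := EuclideanSpace ℝ (Fin m)
  let x' : Fin i → E := fun l => WithLp.toLp 2 (x l)
  have hinner : ∀ a b : E, (inner ℝ a b : ℝ) = (WithLp.ofLp a) ⬝ᵥ (WithLp.ofLp b) := by
    intro a b
    rw [EuclideanSpace.inner_eq_star_dotProduct, dotProduct_comm]
    rfl
  have hon : Orthonormal ℝ x' := by
    rw [orthonormal_iff_ite]
    intro s t
    rw [hinner]
    exact hx s t
  set V : Submodule ℝ E := Submodule.span ℝ (Set.range x') with hV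
  have hVx : ∀ v : Fin m → ℝ, v ∈ Submodule.span ℝ (Set.range x) ↔ (WithLp.toLp 2 v : E) ∈ V := fun v => by
    rw [hV, show Set.range x' = (WithLp.linearEquiv 2 ℝ (Fin m → ℝ)).symm '' Set.range x from
      (Set.range_comp _ _)]
    exact (Submodule.apply_mem_span_image_iff_mem_span
      (WithLp.linearEquiv 2 ℝ (Fin m → ℝ)).symm.injective).symm
  have hrank : Module.finrank ℝ V = i := by
    rw [hV, finrank_span_eq_card hon.linearIndependent, Fintype.card_fin]
  let Bl : E →ₗ[ℝ] E :=
    { toFun := fun v => WithLp.toLp 2 (B.mulVec (WithLp.ofLp v))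
      map_add' := fun a b => congrArg (WithLp.toLp 2) (B.mulVec_add a.ofLp b.ofLp)
      map_smul' := fun r a => congrArg (WithLp.toLp 2) (B.mulVec_smul r a.ofLp) }
  have hBV : ∀ v ∈ V, Bl v ∈ V := by
    intro v hv
    induction hv using Submodule.span_induction with
    | mem v hv =>
        obtain ⟨l, rfl⟩ := hv
        exact (hVx _).mp (hinv l)
    | zero => simp only [map_zero]; exact V.zero_mem
    | add a b _ _ ha hb => rw [map_add]; exact V.add_mem ha hb
    | smul r a _ ha => rw [LinearMap.map_smul]; exact V.smul_mem r ha
  let T : V →ₗ[ℝ] V := Bl.restrict hBV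
  have hsym : ∀ a b : Fin m → ℝ, (B.mulVec a) ⬝ᵥ b = a ⬝ᵥ B.mulVec b := by
    intro a b
    rw [dotProduct_comm, dotProduct_mulVec, ← Matrix.mulVec_transpose, hB.eq, dotProduct_comm]
  have hT : T.IsSymmetric := by
    intro u v
    show (inner ℝ (Bl (u:E)) (v:E) : ℝ) = inner ℝ (u:E) (Bl (v:E))
    rw [hinner, hinner]
    exact hsym (u : E).ofLp (v : E).ofLp
  haveI : FiniteDimensional ℝ V := FiniteDimensional.span_of_finite ℝ (Set.finite_range x')
  let bas := hT.eigenvectorBasis hrank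
  refine ⟨fun l => WithLp.ofLp (bas l : E), ?_, ?_, ?_⟩
  · have hli : LinearIndependent ℝ (fun l => (bas l : V)) := bas.toBasis.linearIndependent
    have := (hli.map' V.subtype (Submodule.ker_subtype V)).map'
      (WithLp.linearEquiv 2 ℝ (Fin m → ℝ)).toLinearMap (LinearEquiv.ker _)
    exact this
  · intro l
    refine ⟨hT.eigenvalues hrank l, ?_⟩
    have h := hT.apply_eigenvectorBasis hrank l
    have h2 := congrArg (fun z : V => (z : E)) h
    simp only [Submodule.coe_smul] at h2
    exact congrArg WithLp.ofLp h2
  · intro l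
    exact (hVx _).mpr (bas l).2

lemma eig_invariant {m i : ℕ} {B : Matrix (Fin m) (Fin m) ℝ}
    {x : Fin i → Fin m → ℝ} (hx : IsOrthonormalFrame x)
    (hex : ∃ w : Fin i → (Fin m → ℝ),
        LinearIndependent ℝ w ∧
        (∀ l, ∃ μ : ℝ, B.mulVec (w l) = μ • w l) ∧
        (∀ l, w l ∈ Submodule.span ℝ (Set.range x))) :
    ∀ l, B.mulVec (x l) ∈ Submodule.span ℝ (Set.range x) := by
  obtain ⟨w, hli, heig, hmem⟩ := hex
  have hxli : LinearIndependent ℝ x := dot_orthonormal_li x hx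
  haveI : FiniteDimensional ℝ (Submodule.span ℝ (Set.range x)) :=
    FiniteDimensional.span_of_finite ℝ (Set.finite_range x)
  have hle : Submodule.span ℝ (Set.range w) ≤ Submodule.span ℝ (Set.range x) :=
    Submodule.span_le.mpr (by rintro _ ⟨l, rfl⟩; exact hmem l)
  have h1 : Module.finrank ℝ (Submodule.span ℝ (Set.range w)) = i := by
    rw [finrank_span_eq_card hli, Fintype.card_fin]
  have h2 : Module.finrank ℝ (Submodule.span ℝ (Set.range x)) = i := by
    rw [finrank_span_eq_card hxli, Fintype.card_fin]
  have heq : Submodule.span ℝ (Set.range w) = Submodule.span ℝ (Set.range x) :=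
    Submodule.eq_of_le_of_finrank_le hle (by rw [h1, h2])
  have hmap : ∀ v ∈ Submodule.span ℝ (Set.range w), B.mulVec v ∈ Submodule.span ℝ (Set.range w) := by
    intro v hv
    induction hv using Submodule.span_induction with
    | mem v hv =>
        obtain ⟨l, rfl⟩ := hv
        obtain ⟨μ, hμ⟩ := heig l
        rw [hμ]
        exact Submodule.smul_mem _ _ (Submodule.subset_span (Set.mem_range_self l))
    | zero => rw [Matrix.mulVec_zero]; exact Submodule.zero_mem _
    | add a b _ _ ha hb => rw [Matrix.mulVec_add]; exact Submodule.add_mem _ ha hb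
    | smul r a _ ha => rw [Matrix.mulVec_smul]; exact Submodule.smul_mem _ _ ha
  intro l
  have hxl : x l ∈ Submodule.span ℝ (Set.range w) := by
    rw [heq]; exact Submodule.subset_span (Set.mem_range_self l)
  rw [← heq]
  exact hmap _ hxl

lemma invariant_critical {m i : ℕ} {B : Matrix (Fin m) (Fin m) ℝ} (hB : B.IsSymm)
    {x : Fin i → Fin m → ℝ} (hx : IsOrthonormalFrame x)
    (hBx : ∀ l, B.mulVec (x l) ∈ Submodule.span ℝ (Set.range x)) :
    StiefelCritical (fun y => ∑ l, y l ⬝ᵥ B.mulVec (y l)) x := by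
  have hsym : ∀ a b : Fin m → ℝ, (B.mulVec a) ⬝ᵥ b = a ⬝ᵥ B.mulVec b := symm_dot hB
  set d : Fin i → Fin i → ℝ := fun l s => x s ⬝ᵥ B.mulVec (x l) with hd_def
  have hexp : ∀ l, B.mulVec (x l) = ∑ s, d l s • x s := by
    intro l
    obtain ⟨c, hc⟩ := (Submodule.mem_span_range_iff_exists_fun ℝ).mp (hBx l)
    have hcd : ∀ s, d l s = c s := by
      intro s
      rw [hd_def]
      simp only
      rw [← hc, dot_sum_smul]
      rw [Finset.sum_eq_single s (fun b _ hb => by rw [hx s b, if_neg (Ne.symm hb), mul_zero])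
        (fun h => absurd (Finset.mem_univ s) h), hx s s, if_pos rfl, mul_one]
    rw [← hc]
    exact Finset.sum_congr rfl fun s _ => by rw [hcd s]
  have hdsym : ∀ l s, d l s = d s l := by
    intro l s
    rw [hd_def]
    simp only
    rw [← hsym, dotProduct_comm]
  intro γ hdiff h0 horth
  set v : Fin i → Fin m → ℝ := fun l j => deriv (fun t => γ t l j) 0 with hv_def
  have hv : ∀ l j, HasDerivAt (fun t => γ t l j) (v l j) 0 := fun l j =>
    (hdiff l j 0).hasDerivAt
  have h0s : ∀ s, γ 0 s = x s := fun s => congrFun h0 s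
  have hG : HasDerivAt (fun t => ∑ l, γ t l ⬝ᵥ B.mulVec (γ t l))
      (∑ l, (v l ⬝ᵥ B.mulVec (x l) + x l ⬝ᵥ B.mulVec (v l))) 0 := by
    have h := HasDerivAt.fun_sum (fun l (_ : l ∈ Finset.univ) => quad_deriv B (hv l))
    simpa only [h0s] using h
  have hcons : ∀ s a : Fin i, v s ⬝ᵥ x a + x s ⬝ᵥ v a = 0 := by
    intro s a
    have h1 : HasDerivAt (fun t => γ t s ⬝ᵥ γ t a) (v s ⬝ᵥ x a + x s ⬝ᵥ v a) 0 := by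
      have h := dot_deriv (hv s) (hv a)
      simpa only [h0s] using h
    have h2 : (fun t => γ t s ⬝ᵥ γ t a) = fun _ => (if s = a then (1:ℝ) else 0) :=
      funext fun t => horth t s a
    have h3 : HasDerivAt (fun t => γ t s ⬝ᵥ γ t a) 0 0 := by
      rw [h2]; exact hasDerivAt_const _ _
    exact h1.unique h3
  rw [hG.deriv]
  set S : ℝ := ∑ l, ∑ s, d l s * (x s ⬝ᵥ v l) with hS_def
  have hSneg : S = -S := by
    calc S = ∑ s, ∑ l, d l s * (x s ⬝ᵥ v l) := Finset.sum_comm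
    _ = ∑ s, ∑ l, -(d s l * (x l ⬝ᵥ v s)) := by
        refine Finset.sum_congr rfl fun s _ => Finset.sum_congr rfl fun l _ => ?_
        have hxv : x s ⬝ᵥ v l = -(x l ⬝ᵥ v s) := by
          have h := hcons l s
          have h2 : v l ⬝ᵥ x s = x s ⬝ᵥ v l := dotProduct_comm _ _
          linarith
        rw [hxv, hdsym l s]
        ring
    _ = -S := by
        rw [hS_def, ← Finset.sum_neg_distrib]
        exact Finset.sum_congr rfl fun s _ => Finset.sum_neg_distrib _
  have hS0 : S = 0 := by linarith
  have hterm : ∀ l, v l ⬝ᵥ B.mulVec (x l) + x l ⬝ᵥ B.mulVec (v l)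
      = 2 * ((B.mulVec (x l)) ⬝ᵥ v l) := by
    intro l
    rw [dotProduct_comm (v l), hsym (x l) (v l)]
    ring
  have hsum : ∑ l, (v l ⬝ᵥ B.mulVec (x l) + x l ⬝ᵥ B.mulVec (v l)) = 2 * S := by
    rw [hS_def, Finset.mul_sum]
    refine Finset.sum_congr rfl fun l _ => ?_
    rw [hterm l, hexp l, sum_smul_dot, Finset.mul_sum]
  rw [hsum, hS0, mul_zero]

/-- For a symmetric matrix `B`, the orthonormal frame `(x₁,…,x_i)` is a critical point of
`g_B(x₁,…,x_i) = Σ_l x_lᵀ B x_l` on the Stiefel manifold iff `span(x₁,…,x_i)` contains `i`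
linearly independent eigenvectors of `B`. -/
theorem stiefel_critical_iff_eigenvectors (m i : ℕ)
    (B : Matrix (Fin m) (Fin m) ℝ) (hB : B.IsSymm)
    (x : Fin i → Fin m → ℝ) (hx : IsOrthonormalFrame x) :
    StiefelCritical (fun y => ∑ l, y l ⬝ᵥ B.mulVec (y l)) x ↔
      ∃ w : Fin i → (Fin m → ℝ),
        LinearIndependent ℝ w ∧
        (∀ l, ∃ μ : ℝ, B.mulVec (w l) = μ • w l) ∧
        (∀ l, w l ∈ Submodule.span ℝ (Set.range x)) := by
  constructor
  · intro hcrit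
    exact spectral_part hB hx fun l => critical_invariant hB hx hcrit l
  · intro hex
    exact invariant_critical hB hx (eig_invariant hx hex)
end

section
/- Let α ∈ ℝ^{m1}⊗ℝ^{m2} be represented by the matrix A ∈ ℝ^{m1×m2} and let 1 ≤ i ≤ m1. Then a subspace U ∈ Gr(i,ℝ^{m1}) is a critical point of the function X ↦ ‖P_{X⊗ℝ^{m2}}(α)‖² on the Grassmannian Gr(i,ℝ^{m1}) if and only if U is spanned by i left singular vectors of A (equivalently, U is an invariant subspace of AA^⊤). -/
open Matrix

/-- The elementary tensor `x ⊗ y` in `EuclideanSpace ℝ (Fin m₁ × Fin m₂)`. -/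
noncomputable def tprod2 {m₁ m₂ : ℕ}
    (x : EuclideanSpace ℝ (Fin m₁)) (y : EuclideanSpace ℝ (Fin m₂)) :
    EuclideanSpace ℝ (Fin m₁ × Fin m₂) :=
  WithLp.toLp 2 (fun p => x p.1 * y p.2)

/-- The subspace `X ⊗ Y` of `ℝ^{m₁×m₂}`. -/
noncomputable def tensorSub2 {m₁ m₂ : ℕ}
    (X : Submodule ℝ (EuclideanSpace ℝ (Fin m₁)))
    (Y : Submodule ℝ (EuclideanSpace ℝ (Fin m₂))) :
    Submodule ℝ (EuclideanSpace ℝ (Fin m₁ × Fin m₂)) :=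
  Submodule.span ℝ {T | ∃ x ∈ X, ∃ y ∈ Y, T = tprod2 x y}

/-- `‖P_{X ⊗ ℝ^{m₂}}(α)‖²` as a function of the subspace `X`. -/
noncomputable def projNormSq {m₁ m₂ : ℕ} (α : EuclideanSpace ℝ (Fin m₁ × Fin m₂))
    (X : Submodule ℝ (EuclideanSpace ℝ (Fin m₁))) : ℝ :=
  ‖(Submodule.orthogonalProjection (tensorSub2 X (⊤ : Submodule ℝ (EuclideanSpace ℝ (Fin m₂)))) α :
      EuclideanSpace ℝ (Fin m₁ × Fin m₂))‖ ^ 2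

/-! ### Auxiliary lemmas -/

theorem proj_span_orthonormal {E : Type*} [NormedAddCommGroup E] [InnerProductSpace ℝ E]
    {ι : Type*} [Fintype ι] [DecidableEq ι]
    (v : ι → E) (hv : Orthonormal ℝ v) (α : E)
    [Submodule.HasOrthogonalProjection (Submodule.span ℝ (Set.range v))] :
    (Submodule.orthogonalProjection (Submodule.span ℝ (Set.range v)) α : E)
      = ∑ j, (inner ℝ (v j) α : ℝ) • v j := by
  apply Submodule.eq_starProjection_of_mem_of_inner_eq_zero
  · exact Submodule.sum_mem _ fun j _ => Submodule.smul_mem _ _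
      (Submodule.subset_span (Set.mem_range_self j))
  · intro w hw
    induction hw using Submodule.span_induction with
    | mem w hw =>
      obtain ⟨j, rfl⟩ := hw
      rw [inner_sub_left, sub_eq_zero, sum_inner]
      simp only [real_inner_smul_left]
      simp only [orthonormal_iff_ite.mp hv, mul_ite, mul_one, mul_zero,
        Finset.sum_ite_eq' Finset.univ, Finset.mem_univ, if_true]
      rw [real_inner_comm]
    | zero => simp
    | add x y _ _ hx hy => rw [inner_add_right, hx, hy, add_zero]
    | smul a x _ hx => rw [inner_smul_right, hx, mul_zero]

theorem inner_tprod2 {m₁ m₂ : ℕ} (x x' : EuclideanSpace ℝ (Fin m₁))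
    (y y' : EuclideanSpace ℝ (Fin m₂)) :
    (inner ℝ (tprod2 x y) (tprod2 x' y') : ℝ) = (inner ℝ x x' : ℝ) * (inner ℝ y y' : ℝ) := by
  simp only [tprod2, PiLp.inner_apply, RCLike.inner_apply, conj_trivial]
  rw [Fintype.sum_prod_type, Finset.sum_mul_sum]
  exact Finset.sum_congr rfl fun j _ => Finset.sum_congr rfl fun k _ => by ring

/-- The tensor frame `x_l ⊗ e_k`. -/
noncomputable def tb {m₁ m₂ i : ℕ} (x : Fin i → EuclideanSpace ℝ (Fin m₁)) :
    Fin i × Fin m₂ → EuclideanSpace ℝ (Fin m₁ × Fin m₂) :=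
  fun q => tprod2 (x q.1) (EuclideanSpace.single q.2 (1:ℝ))

theorem orthonormal_tb {m₁ m₂ i : ℕ} {x : Fin i → EuclideanSpace ℝ (Fin m₁)}
    (hx : Orthonormal ℝ x) : Orthonormal ℝ (tb (m₂ := m₂) x) := by
  rw [orthonormal_iff_ite]
  intro p q
  rw [tb, tb, inner_tprod2, orthonormal_iff_ite.mp hx]
  have : (inner ℝ (EuclideanSpace.single p.2 (1:ℝ)) (EuclideanSpace.single q.2 (1:ℝ)) : ℝ)
      = if p.2 = q.2 then 1 else 0 := by
    simp [EuclideanSpace.inner_single_left, EuclideanSpace.single_apply, eq_comm]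
  rw [this]
  rcases p with ⟨p1, p2⟩; rcases q with ⟨q1, q2⟩
  simp [Prod.ext_iff, ite_and]
  split_ifs <;> simp_all

/-- `tprod2` as a linear map in the first argument. -/
noncomputable def tprodL {m₁ m₂ : ℕ} (y : EuclideanSpace ℝ (Fin m₂)) :
    EuclideanSpace ℝ (Fin m₁) →ₗ[ℝ] EuclideanSpace ℝ (Fin m₁ × Fin m₂) where
  toFun x := tprod2 x y
  map_add' a b := PiLp.ext fun p => by
    show (a p.1 + b p.1) * y p.2 = a p.1 * y p.2 + b p.1 * y p.2
    ring
  map_smul' c a := PiLp.ext fun p => by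
    show (c * a p.1) * y p.2 = c * (a p.1 * y p.2)
    ring

theorem span_tb {m₁ m₂ i : ℕ} (x : Fin i → EuclideanSpace ℝ (Fin m₁)) :
    Submodule.span ℝ (Set.range (tb (m₂ := m₂) x))
      = tensorSub2 (Submodule.span ℝ (Set.range x))
          (⊤ : Submodule ℝ (EuclideanSpace ℝ (Fin m₂))) := by
  apply le_antisymm
  · rw [Submodule.span_le]
    rintro _ ⟨⟨l, k⟩, rfl⟩
    exact Submodule.subset_span ⟨x l, Submodule.subset_span ⟨l, rfl⟩, _, trivial, rfl⟩
  · rw [tensorSub2, Submodule.span_le]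
    rintro _ ⟨x', hx', y', -, rfl⟩
    have h1 : tprod2 x' y' = ∑ k, y' k • tprod2 x' (EuclideanSpace.single k (1:ℝ)) := by
      refine PiLp.ext fun p => ?_
      show x' p.1 * y' p.2 = (∑ k, y' k • tprod2 x' (EuclideanSpace.single k (1:ℝ))) p
      rw [WithLp.ofLp_sum, Finset.sum_apply]
      simp [tprod2, EuclideanSpace.single_apply, mul_ite, Finset.sum_ite_eq' Finset.univ]
      ring
    rw [h1]
    refine Submodule.sum_mem _ fun k _ => Submodule.smul_mem _ _ ?_
    have h2 : tprod2 x' (EuclideanSpace.single k (1:ℝ))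
        ∈ Submodule.span ℝ (tprodL (EuclideanSpace.single k (1:ℝ)) '' Set.range x) :=
      Submodule.apply_mem_span_image_of_mem_span _ hx'
    refine Submodule.span_le.mpr ?_ h2
    rintro _ ⟨_, ⟨l, rfl⟩, rfl⟩
    exact Submodule.subset_span ⟨(l, k), rfl⟩

theorem eq_orthogonalProjection_of_eq_submodule {E : Type*} [NormedAddCommGroup E]
    [InnerProductSpace ℝ E] {K K' : Submodule ℝ E} [K.HasOrthogonalProjection]
    [K'.HasOrthogonalProjection] (h : K = K') (u : E) :
    (Submodule.orthogonalProjection K u : E) = (Submodule.orthogonalProjection K' u : E) := by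
  subst h; rfl

theorem projNormSq_eq {m₁ m₂ : ℕ} (A : Matrix (Fin m₁) (Fin m₂) ℝ)
    (α : EuclideanSpace ℝ (Fin m₁ × Fin m₂)) (hα : ∀ p, α p = A p.1 p.2)
    {i : ℕ} (x : Fin i → EuclideanSpace ℝ (Fin m₁)) (hx : Orthonormal ℝ x) :
    projNormSq α (Submodule.span ℝ (Set.range x))
      = ∑ l, ∑ k, (∑ j, x l j * A j k) ^ 2 := by
  have hb := orthonormal_tb (m₂ := m₂) hx
  rw [projNormSq,
    eq_orthogonalProjection_of_eq_submodule (span_tb x).symm α,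
    proj_span_orthonormal _ hb α, ← real_inner_self_eq_norm_sq, sum_inner]
  simp only [real_inner_smul_left, inner_sum, real_inner_smul_right,
    orthonormal_iff_ite.mp hb, mul_ite, mul_one, mul_zero,
    Finset.sum_ite_eq' Finset.univ, Finset.sum_ite_eq Finset.univ, Finset.mem_univ, if_true]
  rw [Fintype.sum_prod_type]
  refine Finset.sum_congr rfl fun l _ => Finset.sum_congr rfl fun k _ => ?_
  have hcoef : (inner ℝ (tb x (l, k)) α : ℝ) = ∑ j, x l j * A j k := by
    simp only [PiLp.inner_apply, RCLike.inner_apply, conj_trivial, tb, tprod2]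
    rw [Fintype.sum_prod_type]
    refine Finset.sum_congr rfl fun j _ => ?_
    simp [EuclideanSpace.single_apply, hα, mul_ite, Finset.sum_ite_eq' Finset.univ]
    ring
  rw [hcoef]; ring

theorem key_id {m₁ m₂ : ℕ} (A : Matrix (Fin m₁) (Fin m₂) ℝ) (u v : Fin m₁ → ℝ) :
    ∑ k, (∑ j, u j * A j k) * (∑ j, v j * A j k)
      = ∑ j, u j * (A * Aᵀ).mulVec v j := by
  simp only [Matrix.mulVec, Matrix.mul_apply, dotProduct, Matrix.transpose_apply,
    Finset.sum_mul, Finset.mul_sum]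
  refine (Finset.sum_comm).trans ?_
  refine (Finset.sum_congr rfl fun a _ => Finset.sum_comm).trans ?_
  refine (Finset.sum_comm).trans ?_
  exact Finset.sum_congr rfl fun b _ => Finset.sum_congr rfl fun a _ =>
    Finset.sum_congr rfl fun k _ => by ring

theorem key_symm {m₁ m₂ : ℕ} (A : Matrix (Fin m₁) (Fin m₂) ℝ) (u v : Fin m₁ → ℝ) :
    ∑ j, u j * (A * Aᵀ).mulVec v j = ∑ j, v j * (A * Aᵀ).mulVec u j := by
  rw [← key_id, ← key_id]
  exact Finset.sum_congr rfl fun k _ => by ring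

theorem hasDerivAt_g {m₁ m₂ i : ℕ} (A : Matrix (Fin m₁) (Fin m₂) ℝ)
    (c : ℝ → Fin i → EuclideanSpace ℝ (Fin m₁)) (d : Fin i → Fin m₁ → ℝ)
    (hc : ∀ l j, HasDerivAt (fun t => c t l j) (d l j) 0) :
    HasDerivAt (fun t => ∑ l, ∑ k, (∑ j, c t l j * A j k) ^ 2)
      (∑ l, ∑ k, 2 * (∑ j, c 0 l j * A j k) * (∑ j, d l j * A j k)) 0 := by
  refine HasDerivAt.fun_sum fun l _ => HasDerivAt.fun_sum fun k _ => ?_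
  have h1 : HasDerivAt (fun t => ∑ j, c t l j * A j k) (∑ j, d l j * A j k) 0 :=
    HasDerivAt.fun_sum fun j _ => (hc l j).mul_const (A j k)
  have h2 := h1.pow 2
  exact h2.congr_deriv (by ring)

theorem deriv_formula {m₁ m₂ : ℕ} (A : Matrix (Fin m₁) (Fin m₂) ℝ)
    (α : EuclideanSpace ℝ (Fin m₁ × Fin m₂)) (hα : ∀ p, α p = A p.1 p.2)
    {i : ℕ} (c : ℝ → Fin i → EuclideanSpace ℝ (Fin m₁)) (d : Fin i → Fin m₁ → ℝ)
    (hd : ∀ l j, HasDerivAt (fun t => c t l j) (d l j) 0)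
    (horth : ∀ t, Orthonormal ℝ (c t)) :
    deriv (fun t => projNormSq α (Submodule.span ℝ (Set.range (c t)))) 0
      = ∑ l, ∑ k, 2 * (∑ j, c 0 l j * A j k) * (∑ j, d l j * A j k) := by
  have heq : (fun t => projNormSq α (Submodule.span ℝ (Set.range (c t))))
      = fun t => ∑ l, ∑ k, (∑ j, c t l j * A j k) ^ 2 :=
    funext fun t => projNormSq_eq A α hα _ (horth t)
  rw [heq]
  exact (hasDerivAt_g A c d hd).deriv

/-- `v ↦ (A Aᵀ) v` as a linear map on `EuclideanSpace`. -/
noncomputable def ML {m₁ m₂ : ℕ} (A : Matrix (Fin m₁) (Fin m₂) ℝ) :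
    EuclideanSpace ℝ (Fin m₁) →ₗ[ℝ] EuclideanSpace ℝ (Fin m₁) where
  toFun v := WithLp.toLp 2 ((A * Aᵀ).mulVec v)
  map_add' a b := PiLp.ext fun j => by
    show ∑ k, (A * Aᵀ) j k * (a k + b k) = (∑ k, (A * Aᵀ) j k * a k) + ∑ k, (A * Aᵀ) j k * b k
    rw [← Finset.sum_add_distrib]
    exact Finset.sum_congr rfl fun k _ => by ring
  map_smul' r a := PiLp.ext fun j => by
    show ∑ k, (A * Aᵀ) j k * (r * a k) = r * ∑ k, (A * Aᵀ) j k * a k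
    rw [Finset.mul_sum]
    exact Finset.sum_congr rfl fun k _ => by ring

theorem coe_orthonormal {E : Type*} [NormedAddCommGroup E] [InnerProductSpace ℝ E]
    {U : Submodule ℝ E} {ι : Type*} {v : ι → U} (hv : Orthonormal ℝ v) :
    Orthonormal ℝ (fun l => ((v l : U) : E)) := by
  classical
  rw [orthonormal_iff_ite] at hv ⊢
  intro p q
  rw [← Submodule.coe_inner]
  exact hv p q

theorem span_coe_eq {E : Type*} [NormedAddCommGroup E] [InnerProductSpace ℝ E]
    {U : Submodule ℝ E} {n : ℕ} (b : OrthonormalBasis (Fin n) ℝ U) :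
    Submodule.span ℝ (Set.range (fun l => ((b l : U) : E))) = U := by
  have h1 : Set.range (fun l => ((b l : U) : E)) = U.subtype '' Set.range b := by
    rw [← Set.range_comp]; rfl
  rw [h1, Submodule.span_image]
  have h2 : Submodule.span ℝ (Set.range b) = ⊤ := by
    have := b.toBasis.span_eq
    rwa [b.coe_toBasis] at this
  rw [h2, Submodule.map_top, Submodule.range_subtype]

/-- `U ∈ Gr(i,ℝ^{m₁})` is a critical point of `X ↦ ‖P_{X⊗ℝ^{m₂}}(α)‖²` on the
Grassmannian (criticality tested along differentiable curves of orthonormal frames) iff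
`U` is spanned by `i` left singular vectors of `A`, i.e. by `i` linearly independent
eigenvectors of `A Aᵀ`. -/
theorem grassmannian_critical_iff_singular_vectors (m₁ m₂ i : ℕ) (hi : 1 ≤ i) (him : i ≤ m₁)
    (A : Matrix (Fin m₁) (Fin m₂) ℝ)
    (α : EuclideanSpace ℝ (Fin m₁ × Fin m₂)) (hα : ∀ p, α p = A p.1 p.2)
    (U : Submodule ℝ (EuclideanSpace ℝ (Fin m₁))) (hU : Module.finrank ℝ U = i) :
    (∀ c : ℝ → (Fin i → EuclideanSpace ℝ (Fin m₁)),
      (∀ l j, Differentiable ℝ fun t => c t l j) →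
      (∀ t, Orthonormal ℝ (c t)) →
      Submodule.span ℝ (Set.range (c 0)) = U →
      deriv (fun t => projNormSq α (Submodule.span ℝ (Set.range (c t)))) 0 = 0) ↔
    (∃ w : Fin i → EuclideanSpace ℝ (Fin m₁),
      LinearIndependent ℝ w ∧
      (∀ l, ∃ μ : ℝ, (A * Aᵀ).mulVec (w l) = μ • w l) ∧
      Submodule.span ℝ (Set.range w) = U) := by
  constructor
  · -- criticality ⇒ spanned by eigenvectors
    intro hcrit
    haveI : FiniteDimensional ℝ (↥U) := inferInstance
    let b0 : OrthonormalBasis (Fin i) ℝ U :=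
      (stdOrthonormalBasis ℝ U).reindex (finCongr hU)
    set u : Fin i → EuclideanSpace ℝ (Fin m₁) := fun l => ((b0 l : U) : _) with hu_def
    have hu_on : Orthonormal ℝ u := coe_orthonormal b0.orthonormal
    have hu_span : Submodule.span ℝ (Set.range u) = U := span_coe_eq b0
    have hu_mem : ∀ l, u l ∈ U := fun l => (b0 l).2
    -- Step 1: invariance
    have hclaim : ∀ (l0 : Fin i), ∀ v ∈ Uᗮ, ‖v‖ = 1 →
        ∑ j, v j * (A * Aᵀ).mulVec (u l0) j = 0 := by
      intro l0 v hv hv1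
      classical
      set c : ℝ → Fin i → EuclideanSpace ℝ (Fin m₁) :=
        fun t l => if l = l0 then Real.cos t • u l0 + Real.sin t • v else u l with hc_def
      have hc_apply : ∀ t l j, c t l j
          = if l = l0 then Real.cos t * u l0 j + Real.sin t * v j else u l j := by
        intro t l j
        by_cases h : l = l0 <;> simp [hc_def, h]
      have hdiff : ∀ l j, Differentiable ℝ fun t => c t l j := by
        intro l j
        have : (fun t => c t l j) = fun t =>
            if l = l0 then Real.cos t * u l0 j + Real.sin t * v j else u l j :=
          funext fun t => hc_apply t l j
        rw [this]
        by_cases h : l = l0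
        · simp only [h, if_true]
          exact (Real.differentiable_cos.mul_const _).add (Real.differentiable_sin.mul_const _)
        · simp only [h, if_false]
          exact differentiable_const _
      have hvu : ∀ l, (inner ℝ v (u l) : ℝ) = 0 :=
        fun l => Submodule.inner_left_of_mem_orthogonal (hu_mem l) hv
      have huv : ∀ l, (inner ℝ (u l) v : ℝ) = 0 :=
        fun l => Submodule.inner_right_of_mem_orthogonal (hu_mem l) hv
      have hvv : (inner ℝ v v : ℝ) = 1 := by
        rw [real_inner_self_eq_norm_sq, hv1]; norm_num
      have horth : ∀ t, Orthonormal ℝ (c t) := by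
        intro t
        rw [orthonormal_iff_ite]
        intro l l'
        have hite := orthonormal_iff_ite.mp hu_on
        have hcc0 : ∀ l'', l'' ≠ l0 → c t l'' = u l'' := fun l'' h => by simp [hc_def, h]
        have hccl0 : c t l0 = Real.cos t • u l0 + Real.sin t • v := by simp [hc_def]
        by_cases h : l = l0
        · by_cases h' : l' = l0
          · rw [h, h', if_pos rfl, hccl0]
            simp only [inner_add_left, inner_add_right, real_inner_smul_left,
              real_inner_smul_right, hvv, huv, hvu, hite, if_pos rfl, if_true, ite_true]
            nlinarith [Real.sin_sq_add_cos_sq t]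
          · have hne : l ≠ l' := fun hh => h' (hh ▸ h)
            rw [if_neg hne, h, hccl0, hcc0 l' h']
            have hne2 : ¬ (l0 = l') := fun hh => h' hh.symm
            rw [inner_add_left, real_inner_smul_left, real_inner_smul_left, hite, hvu,
              if_neg hne2, mul_zero, mul_zero, add_zero]
        · by_cases h' : l' = l0
          · have hne : l ≠ l' := fun hh => h (hh.trans h')
            rw [if_neg hne, h', hcc0 l h, hccl0]
            have hne2 : ¬ (l = l0) := h
            rw [inner_add_right, real_inner_smul_right, real_inner_smul_right, hite, huv,
              if_neg hne2, mul_zero, mul_zero, add_zero]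
          · rw [hcc0 l h, hcc0 l' h', hite]
      have hc0 : c 0 = u := by
        funext l
        by_cases h : l = l0 <;> simp [hc_def, h]
      have hspan0 : Submodule.span ℝ (Set.range (c 0)) = U := by rw [hc0, hu_span]
      set d : Fin i → Fin m₁ → ℝ := fun l => if l = l0 then (fun j => v j) else 0 with hd_def
      have hd : ∀ l j, HasDerivAt (fun t => c t l j) (d l j) 0 := by
        intro l j
        have : (fun t => c t l j) = fun t =>
            if l = l0 then Real.cos t * u l0 j + Real.sin t * v j else u l j :=
          funext fun t => hc_apply t l j
        rw [this]
        by_cases h : l = l0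
        · simp only [h, if_true, hd_def]
          have h1 := ((Real.hasDerivAt_cos 0).mul_const (u l0 j)).add
            ((Real.hasDerivAt_sin 0).mul_const (v j))
          exact h1.congr_deriv (by simp)
        · simp only [h, if_false, hd_def]
          exact hasDerivAt_const _ _
      have hder := deriv_formula A α hα c d hd horth
      rw [hcrit c hdiff horth hspan0] at hder
      have hterm : ∀ l, l ≠ l0 →
          ∑ k, 2 * (∑ j, c 0 l j * A j k) * (∑ j, d l j * A j k) = 0 := by
        intro l hl
        have : d l = 0 := by simp [hd_def, hl]
        simp [this]
      rw [Finset.sum_eq_single l0 (fun l _ hl => hterm l hl) (by simp)] at hder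
      have hsimp : ∑ k, 2 * (∑ j, c 0 l0 j * A j k) * (∑ j, d l0 j * A j k)
          = 2 * ∑ j, v j * (A * Aᵀ).mulVec (u l0) j := by
        rw [← key_id A v (u l0), Finset.mul_sum]
        refine Finset.sum_congr rfl fun k _ => ?_
        have h1 : ∀ j, c 0 l0 j = u l0 j := fun j => by rw [hc0]
        have h2 : ∀ j, d l0 j = v j := fun j => by simp [hd_def]
        simp only [h1, h2]
        ring
      rw [hsimp] at hder
      linarith
    have hinv : ∀ l0, ML A (u l0) ∈ U := by
      intro l0
      rw [← Submodule.orthogonal_orthogonal U]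
      rw [Submodule.mem_orthogonal]
      intro y hy
      by_cases hy0 : y = 0
      · simp [hy0]
      · have hny : ‖y‖ ≠ 0 := norm_ne_zero_iff.mpr hy0
        set v : EuclideanSpace ℝ (Fin m₁) := ‖y‖⁻¹ • y with hv_def
        have hvU : v ∈ Uᗮ := Submodule.smul_mem _ _ hy
        have hv1 : ‖v‖ = 1 := by
          rw [hv_def, norm_smul, norm_inv, norm_norm, inv_mul_cancel₀ hny]
        have h0 := hclaim l0 v hvU hv1
        have hexp : ∑ j, v j * (A * Aᵀ).mulVec (u l0) j
            = ‖y‖⁻¹ * ∑ j, y j * (A * Aᵀ).mulVec (u l0) j := by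
          rw [Finset.mul_sum]
          refine Finset.sum_congr rfl fun j _ => ?_
          have : v j = ‖y‖⁻¹ * y j := rfl
          rw [this]; ring
        rw [hexp] at h0
        have h1 : ∑ j, y j * (A * Aᵀ).mulVec (u l0) j = 0 := by
          rcases mul_eq_zero.mp h0 with h | h
          · exact absurd h (inv_ne_zero hny)
          · exact h
        show (inner ℝ y (ML A (u l0)) : ℝ) = 0
        rw [PiLp.inner_apply]
        exact (Finset.sum_congr rfl fun j _ => mul_comm _ _).trans h1
    have hinv' : ∀ x ∈ U, ML A x ∈ U := by
      intro x hx
      rw [← hu_span] at hx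
      induction hx using Submodule.span_induction with
      | mem z hz => obtain ⟨l, rfl⟩ := hz; exact hinv l
      | zero => rw [map_zero]; exact zero_mem U
      | add a b _ _ ha hb => rw [map_add]; exact add_mem ha hb
      | smul r a _ ha => rw [_root_.map_smul]; exact Submodule.smul_mem U r ha
    let T : ↥U →ₗ[ℝ] ↥U := (ML A).restrict hinv'
    have hT : T.IsSymmetric := by
      intro x y
      rw [Submodule.coe_inner, Submodule.coe_inner, LinearMap.restrict_coe_apply,
        LinearMap.restrict_coe_apply]
      rw [PiLp.inner_apply, PiLp.inner_apply]
      simp only [RCLike.inner_apply, conj_trivial]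
      have hMLx : ∀ z : EuclideanSpace ℝ (Fin m₁), (ML A z).ofLp = (A * Aᵀ).mulVec z := fun _ => rfl
      rw [hMLx, hMLx]
      calc ∑ j, (↑y : EuclideanSpace ℝ (Fin m₁)) j * (A * Aᵀ).mulVec (↑x) j
          = ∑ j, (↑x : EuclideanSpace ℝ (Fin m₁)) j * (A * Aᵀ).mulVec (↑y) j := key_symm A _ _
        _ = ∑ j, (A * Aᵀ).mulVec (↑y) j * (↑x : EuclideanSpace ℝ (Fin m₁)) j :=
            Finset.sum_congr rfl fun j _ => by ring
    let eb : OrthonormalBasis (Fin i) ℝ (↥U) := hT.eigenvectorBasis hU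
    refine ⟨fun l => ((eb l : U) : _), (coe_orthonormal eb.orthonormal).linearIndependent,
      ?_, span_coe_eq eb⟩
    intro l
    refine ⟨hT.eigenvalues hU l, ?_⟩
    have he := (hT.hasEigenvector_eigenvectorBasis hU l).apply_eq_smul
    have h1 : ((T (eb l) : U) : EuclideanSpace ℝ (Fin m₁))
        = ML A ((eb l : U) : EuclideanSpace ℝ (Fin m₁)) :=
      LinearMap.restrict_coe_apply (ML A) hinv' (eb l)
    show (ML A ((eb l : U) : EuclideanSpace ℝ (Fin m₁))).ofLp
        = (hT.eigenvalues hU l • ((eb l : U) : EuclideanSpace ℝ (Fin m₁))).ofLp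
    rw [← h1, he]
    rfl
  · -- eigenvector span ⇒ criticality
    rintro ⟨w, hw_li, hw_eig, hw_span⟩ c hdiff horth hspan0
    classical
    set d : Fin i → Fin m₁ → ℝ := fun l j => deriv (fun t => c t l j) 0 with hd_def
    have hd : ∀ l j, HasDerivAt (fun t => c t l j) (d l j) 0 :=
      fun l j => ((hdiff l j) 0).hasDerivAt
    rw [deriv_formula A α hα c d hd horth]
    have hwU : ∀ l, w l ∈ U := fun l => hw_span ▸ Submodule.subset_span (Set.mem_range_self l)
    have hinv : ∀ x ∈ U, ML A x ∈ U := by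
      intro x hx
      rw [← hw_span] at hx
      induction hx using Submodule.span_induction with
      | mem z hz =>
        obtain ⟨l, rfl⟩ := hz
        obtain ⟨μ, hμ⟩ := hw_eig l
        have : ML A (w l) = μ • w l := PiLp.ext fun j => congrFun hμ j
        rw [this]
        exact Submodule.smul_mem U μ (hwU l)
      | zero => rw [map_zero]; exact zero_mem U
      | add a b _ _ ha hb => rw [map_add]; exact add_mem ha hb
      | smul r a _ ha => rw [_root_.map_smul]; exact Submodule.smul_mem U r ha
    have hc0mem : ∀ l, c 0 l ∈ U :=
      fun l => hspan0 ▸ Submodule.subset_span (Set.mem_range_self l)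
    set B : Fin i → Fin i → ℝ := fun a b => ∑ j, c 0 a j * ML A (c 0 b) j with hB_def
    set S : Fin i → Fin i → ℝ := fun a b => ∑ j, d b j * c 0 a j with hS_def
    have hexp : ∀ l, ML A (c 0 l) = ∑ l', B l' l • c 0 l' := by
      intro l
      have hmem : ML A (c 0 l) ∈ Submodule.span ℝ (Set.range (c 0)) := by
        rw [hspan0]; exact hinv _ (hc0mem l)
      have hproj := proj_span_orthonormal (c 0) (horth 0) (ML A (c 0 l))
      have hself : (Submodule.orthogonalProjection (Submodule.span ℝ (Set.range (c 0)))
          (ML A (c 0 l)) : EuclideanSpace ℝ (Fin m₁)) = ML A (c 0 l) :=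
        Submodule.starProjection_eq_self_iff.mpr hmem
      rw [hself] at hproj
      rw [hproj]
      refine Finset.sum_congr rfl fun l' _ => ?_
      congr 1
      rw [PiLp.inner_apply]
      simp only [RCLike.inner_apply, conj_trivial]
      exact Finset.sum_congr rfl fun j _ => mul_comm _ _
    have hBsymm : ∀ a b, B a b = B b a := by
      intro a b
      have hMLx : ∀ z : EuclideanSpace ℝ (Fin m₁), (ML A z).ofLp = (A * Aᵀ).mulVec z := fun _ => rfl
      rw [hB_def]
      simp only [hMLx]
      exact key_symm A _ _
    have hSanti : ∀ a b, S a b = - S b a := by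
      intro a b
      -- S a b = ∑ j, d b j * c 0 a j ; S b a = ∑ j, d a j * c 0 b j
      have hfn : (fun t => ∑ j, c t a j * c t b j) = fun _ => if a = b then (1:ℝ) else 0 := by
        funext t
        have := orthonormal_iff_ite.mp (horth t) a b
        rw [PiLp.inner_apply] at this
        simpa [mul_comm] using this
      have hderiv : HasDerivAt (fun t => ∑ j, c t a j * c t b j)
          (∑ j, (d a j * c 0 b j + c 0 a j * d b j)) 0 :=
        HasDerivAt.fun_sum fun j _ => (hd a j).mul (hd b j)
      have h0 : deriv (fun t => ∑ j, c t a j * c t b j) 0 = 0 := by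
        rw [hfn]; simp
      have h1 := hderiv.deriv
      rw [h0] at h1
      rw [Finset.sum_add_distrib] at h1
      have h2 : ∑ j, d a j * c 0 b j = S b a := rfl
      have h3 : ∑ j, c 0 a j * d b j = S a b :=
        Finset.sum_congr rfl fun j _ => by ring
      rw [h2, h3] at h1
      linarith
    have htot : ∑ l, ∑ k, 2 * (∑ j, c 0 l j * A j k) * (∑ j, d l j * A j k)
        = 2 * ∑ l, ∑ l', B l' l * S l' l := by
      rw [Finset.mul_sum]
      refine Finset.sum_congr rfl fun l _ => ?_
      have step1 : ∑ k, 2 * (∑ j, c 0 l j * A j k) * (∑ j, d l j * A j k)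
          = 2 * ∑ j, d l j * ML A (c 0 l) j := by
        have hMLx : (ML A (c 0 l)).ofLp = (A * Aᵀ).mulVec (c 0 l) := rfl
        rw [hMLx, ← key_id A (d l) (c 0 l), Finset.mul_sum]
        exact Finset.sum_congr rfl fun k _ => by ring
      rw [step1]
      congr 1
      calc ∑ j, d l j * ML A (c 0 l) j
          = ∑ j, d l j * ∑ l', B l' l * c 0 l' j := by
            refine Finset.sum_congr rfl fun j _ => ?_
            congr 1
            conv_lhs => rw [hexp l]
            rw [WithLp.ofLp_sum, Finset.sum_apply]
            rfl
        _ = ∑ l', B l' l * S l' l := by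
            simp only [Finset.mul_sum]
            rw [Finset.sum_comm]
            refine Finset.sum_congr rfl fun l' _ => ?_
            rw [hS_def, Finset.mul_sum]
            exact Finset.sum_congr rfl fun j _ => by ring
    rw [htot]
    have hX : (∑ l, ∑ l', B l' l * S l' l) = 0 := by
      have h1 : (∑ l, ∑ l', B l' l * S l' l) = ∑ l, ∑ l', B l l' * S l l' :=
        Finset.sum_comm
      have h2 : (∑ l, ∑ l', B l l' * S l l') = - ∑ l, ∑ l', B l' l * S l' l := by
        rw [← Finset.sum_neg_distrib]
        refine Finset.sum_congr rfl fun l _ => ?_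
        rw [← Finset.sum_neg_distrib]
        refine Finset.sum_congr rfl fun l' _ => ?_
        rw [hBsymm l l', hSanti l l']
        ring
      linarith
    rw [hX, mul_zero]
end

section
/- Let 0 ≠ τ ∈ ℝ^{m1}⊗ℝ^{m2}⊗ℝ^{m3} and p≤m1, q≤m2, r≤m3. A triple of subspaces (U,V,W) ∈ Gr(p,ℝ^{m1})×Gr(q,ℝ^{m2})×Gr(r,ℝ^{m3}) is a critical point of the function (X,Y,Z) ↦ ‖P_{X⊗Y⊗Z}(τ)‖² if and only if: (1) U is spanned by p left singular vectors of the map τ(V,W): ℝ^{m1} → V⊗W; (2) V is spanned by q left singular vectors of τ(U,W): ℝ^{m2} → U⊗W; and (3) W is spanned by r left singular vectors of τ(U,V): ℝ^{m3} → U⊗V. -/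
open Matrix

/-- `‖P_{X⊗Y⊗Z}(τ)‖²` expressed through orthonormal frames `x, y, z` of `X, Y, Z`:
`Σ_{l,m,n} ⟨τ, x_l ⊗ y_m ⊗ z_n⟩²`. -/
def projNormSq3 {m₁ m₂ m₃ p q r : ℕ} (τ : Fin m₁ → Fin m₂ → Fin m₃ → ℝ)
    (x : Fin p → Fin m₁ → ℝ) (y : Fin q → Fin m₂ → ℝ) (z : Fin r → Fin m₃ → ℝ) : ℝ :=
  ∑ l, ∑ m, ∑ n, (∑ i, ∑ j, ∑ k, τ i j k * x l i * y m j * z n k) ^ 2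

/-- The unfolding matrix of `τ(Y,Z) : ℝ^{m₁} → Y ⊗ Z` in the frames `y, z`:
`A₁[i, (m,n)] = Σ_{j,k} τ_{ijk} y_m(j) z_n(k)`; left singular vectors of `τ(Y,Z)` are
the eigenvectors of `A₁ A₁ᵀ`. -/
def unfold1 {m₁ m₂ m₃ q r : ℕ} (τ : Fin m₁ → Fin m₂ → Fin m₃ → ℝ)
    (y : Fin q → Fin m₂ → ℝ) (z : Fin r → Fin m₃ → ℝ) :
    Matrix (Fin m₁) (Fin q × Fin r) ℝ :=
  Matrix.of fun i mn => ∑ j, ∑ k, τ i j k * y mn.1 j * z mn.2 k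

lemma sc {M α β : Type*} [AddCommMonoid M] [Fintype α] [Fintype β] (f : α → β → M) :
    ∑ a, ∑ b, f a b = ∑ b, ∑ a, f a b := Finset.sum_comm

lemma mulVec_sum_smul {m p : ℕ} (B : Matrix (Fin m) (Fin m) ℝ) (a : Fin p → ℝ)
    (v : Fin p → Fin m → ℝ) :
    B.mulVec (∑ s, a s • v s) = ∑ s, a s • B.mulVec (v s) := by
  have : B.mulVec (∑ s, a s • v s) = B.mulVecLin (∑ s, a s • v s) := rfl
  rw [this, map_sum]
  simp [Matrix.mulVecLin_apply]

lemma dot_sum_smul_left {m p : ℕ} (g : Fin p → ℝ) (x : Fin p → Fin m → ℝ) (v : Fin m → ℝ) :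
    (∑ l, g l • x l) ⬝ᵥ v = ∑ l, g l * (x l ⬝ᵥ v) := by
  simp only [dotProduct, Finset.sum_apply, Pi.smul_apply, smul_eq_mul, Finset.sum_mul,
    Finset.mul_sum]
  rw [sc fun i l => g l * x l i * v i]
  exact Finset.sum_congr rfl fun l _ => Finset.sum_congr rfl fun i _ => by ring

lemma frame_linearIndependent {m p : ℕ} (x : Fin p → Fin m → ℝ)
    (hx : IsOrthonormalFrame x) : LinearIndependent ℝ x := by
  have hx' : ∀ s t, x s ⬝ᵥ x t = if s = t then (1 : ℝ) else 0 := hx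
  rw [Fintype.linearIndependent_iff]
  intro g hg t
  have h := congrArg (fun v => v ⬝ᵥ x t) hg
  simp only [dot_sum_smul_left, zero_dotProduct, hx'] at h
  simpa [Finset.sum_ite_eq', mul_ite] using h

lemma mem_span_frame {m p : ℕ} (x : Fin p → Fin m → ℝ) (hx : IsOrthonormalFrame x)
    (v : Fin m → ℝ) (hv : v ∈ Submodule.span ℝ (Set.range x)) :
    v = ∑ s, (v ⬝ᵥ x s) • x s := by
  obtain ⟨a, ha⟩ := (Submodule.mem_span_range_iff_exists_fun ℝ).1 hv
  have hcoef : ∀ s, v ⬝ᵥ x s = a s := by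
    intro s
    have hx' : ∀ s t, x s ⬝ᵥ x t = if s = t then (1 : ℝ) else 0 := hx
    rw [← ha, dot_sum_smul_left]
    simp [hx', Finset.sum_ite_eq', mul_ite]
  simp_rw [hcoef]
  exact ha.symm

lemma spectral {m p : ℕ} (B : Matrix (Fin m) (Fin m) ℝ) (hB : Bᵀ = B)
    (x : Fin p → Fin m → ℝ) (hx : IsOrthonormalFrame x)
    (hinv : ∀ l, B.mulVec (x l) ∈ Submodule.span ℝ (Set.range x)) :
    ∃ w : Fin p → Fin m → ℝ, LinearIndependent ℝ w ∧
      (∀ l, ∃ μ : ℝ, B.mulVec (w l) = μ • w l) ∧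
      Submodule.span ℝ (Set.range w) = Submodule.span ℝ (Set.range x) := by
  have hsymm : ∀ v w : Fin m → ℝ, v ⬝ᵥ B.mulVec w = w ⬝ᵥ B.mulVec v := by
    intro v w
    rw [Matrix.dotProduct_mulVec, ← Matrix.mulVec_transpose, hB, dotProduct_comm]
  set C : Matrix (Fin p) (Fin p) ℝ := Matrix.of fun t s => B.mulVec (x s) ⬝ᵥ x t with hCdef
  have hC : C.IsHermitian := by
    ext t s
    simp only [Matrix.conjTranspose_apply, hCdef, Matrix.of_apply, star_trivial]
    rw [dotProduct_comm, hsymm, dotProduct_comm]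
  set u : Fin p → Fin p → ℝ := fun l => ⇑(hC.eigenvectorBasis l) with hudef
  have hueig : ∀ l, C.mulVec (u l) = hC.eigenvalues l • u l := fun l =>
    hC.mulVec_eigenvectorBasis l
  have huorth : ∀ a b, ∑ s, u a s * u b s = if a = b then (1:ℝ) else 0 := by
    intro a b
    have h := orthonormal_iff_ite.mp hC.eigenvectorBasis.orthonormal a b
    rw [PiLp.inner_apply] at h
    simpa [hudef, RCLike.inner_apply, conj_trivial, mul_comm] using h
  have hucomp : ∀ t s, ∑ l, u l t * u l s = if t = s then (1:ℝ) else 0 := by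
    intro t s
    have h := hC.eigenvectorBasis.sum_inner_mul_inner (EuclideanSpace.single t (1:ℝ))
      (EuclideanSpace.single s (1:ℝ))
    simp only [EuclideanSpace.inner_single_left, EuclideanSpace.inner_single_right,
      EuclideanSpace.single_apply, starRingEnd_apply, star_trivial, one_mul, mul_one] at h
    simpa [hudef, eq_comm, mul_comm] using h
  set w : Fin p → Fin m → ℝ := fun l => ∑ s, u l s • x s with hwdef
  have hwexp : ∀ (g : Fin p → ℝ), ∑ l, g l • w l = ∑ s, (∑ l, g l * u l s) • x s := by
    intro g
    calc ∑ l, g l • w l = ∑ l, ∑ s, (g l * u l s) • x s := by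
          simp [hwdef, Finset.smul_sum, smul_smul]
      _ = ∑ s, ∑ l, (g l * u l s) • x s := sc _
      _ = ∑ s, (∑ l, g l * u l s) • x s := by simp [Finset.sum_smul]
  have hxexp : ∀ s, B.mulVec (x s) = ∑ t, C t s • x t := by
    intro s
    have := mem_span_frame x hx (B.mulVec (x s)) (hinv s)
    simpa [hCdef] using this
  refine ⟨w, ?_, ?_, ?_⟩
  · rw [Fintype.linearIndependent_iff]
    intro g hg t
    rw [hwexp] at hg
    have hcz : ∀ s, (∑ l, g l * u l s) = 0 := by
      have hli := Fintype.linearIndependent_iff.mp (frame_linearIndependent x hx)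
      exact hli _ hg
    have : ∑ s, (∑ l, g l * u l s) * u t s = g t := by
      calc ∑ s, (∑ l, g l * u l s) * u t s = ∑ s, ∑ l, g l * (u l s * u t s) := by
            refine Finset.sum_congr rfl fun s _ => ?_
            rw [Finset.sum_mul]
            exact Finset.sum_congr rfl fun l _ => by ring
        _ = ∑ l, g l * (∑ s, u l s * u t s) := by
            rw [sc fun s l => g l * (u l s * u t s)]
            exact Finset.sum_congr rfl fun l _ => by rw [Finset.mul_sum]
        _ = g t := by simp [huorth, Finset.sum_ite_eq', mul_ite]
    rw [← this]
    simp [hcz]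
  · intro l
    refine ⟨hC.eigenvalues l, ?_⟩
    calc B.mulVec (w l) = ∑ s, u l s • B.mulVec (x s) := mulVec_sum_smul B _ x
      _ = ∑ s, ∑ t, (C t s * u l s) • x t := by
          refine Finset.sum_congr rfl fun s _ => ?_
          rw [hxexp s, Finset.smul_sum]
          exact Finset.sum_congr rfl fun t _ => by rw [smul_smul, mul_comm]
      _ = ∑ t, (∑ s, C t s * u l s) • x t := by
          rw [sc fun s t => (C t s * u l s) • x t]
          exact Finset.sum_congr rfl fun t _ => by rw [Finset.sum_smul]
      _ = ∑ t, (C.mulVec (u l)) t • x t := rfl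
      _ = ∑ t, (hC.eigenvalues l * u l t) • x t := by rw [hueig l]; rfl
      _ = hC.eigenvalues l • w l := by
          rw [hwdef]
          simp [Finset.smul_sum, smul_smul]
  · apply le_antisymm
    · rw [Submodule.span_le]
      rintro _ ⟨l, rfl⟩
      exact Submodule.sum_mem _ fun s _ =>
        Submodule.smul_mem _ _ (Submodule.subset_span ⟨s, rfl⟩)
    · rw [Submodule.span_le]
      rintro _ ⟨t, rfl⟩
      have hxw : x t = ∑ l, u l t • w l := by
        rw [hwexp fun l => u l t]
        have : ∀ s, (∑ l, u l t * u l s) = if t = s then (1:ℝ) else 0 := fun s => hucomp t s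
        simp only [this, ite_smul, one_smul, zero_smul]
        simp
      rw [hxw]
      exact Submodule.sum_mem _ fun l _ =>
        Submodule.smul_mem _ _ (Submodule.subset_span ⟨l, rfl⟩)

lemma sum3_rot {M α β γ : Type*} [AddCommMonoid M] [Fintype α] [Fintype β] [Fintype γ]
    (f : α → β → γ → M) :
    ∑ a, ∑ b, ∑ c, f a b c = ∑ c, ∑ a, ∑ b, f a b c := by
  have h1 : ∀ a, ∑ b, ∑ c, f a b c = ∑ c, ∑ b, f a b c := fun a => sc _
  simp only [h1]
  exact sc _

lemma sum4_swap {α β γ δ : Type*} [Fintype α] [Fintype β] [Fintype γ] [Fintype δ]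
    (T : α → β → γ → δ → ℝ) :
    ∑ a, ∑ b, ∑ c, ∑ d, T a b c d = ∑ c, ∑ d, ∑ a, ∑ b, T a b c d := by
  have h1 : ∀ a, ∑ b, ∑ c, ∑ d, T a b c d = ∑ c, ∑ d, ∑ b, T a b c d := by
    intro a
    rw [sc fun b c => ∑ d, T a b c d]
    exact Finset.sum_congr rfl fun c _ => sc fun b d => T a b c d
  simp only [h1]
  rw [sc fun a c => ∑ d, ∑ b, T a b c d]
  refine Finset.sum_congr rfl fun c _ => ?_
  rw [sc fun a d => ∑ b, T a b c d]

lemma key {m₁ m₂ m₃ p q r : ℕ} (τ : Fin m₁ → Fin m₂ → Fin m₃ → ℝ)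
    (x u : Fin p → Fin m₁ → ℝ) (y : Fin q → Fin m₂ → ℝ) (z : Fin r → Fin m₃ → ℝ) :
    ∑ l, ∑ m, ∑ n, (∑ i, ∑ j, ∑ k, τ i j k * x l i * y m j * z n k) *
        (∑ i, ∑ j, ∑ k, τ i j k * u l i * y m j * z n k)
      = ∑ l, u l ⬝ᵥ (unfold1 τ y z * (unfold1 τ y z)ᵀ).mulVec (x l) := by
  have h1 : ∀ (v : Fin m₁ → ℝ) (m : Fin q) (n : Fin r),
      (∑ i, ∑ j, ∑ k, τ i j k * v i * y m j * z n k)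
        = ∑ i, v i * unfold1 τ y z i (m, n) := by
    intro v m n
    refine Finset.sum_congr rfl fun i _ => ?_
    simp only [unfold1, Matrix.of_apply, Finset.mul_sum]
    refine Finset.sum_congr rfl fun j _ => Finset.sum_congr rfl fun k _ => by ring
  refine Finset.sum_congr rfl fun l _ => ?_
  simp only [h1]
  have h2 : u l ⬝ᵥ (unfold1 τ y z * (unfold1 τ y z)ᵀ).mulVec (x l)
      = ∑ i, ∑ i', ∑ m, ∑ n,
          u l i * (unfold1 τ y z i (m, n) * unfold1 τ y z i' (m, n) * x l i') := by
    simp only [Matrix.mulVec, dotProduct, Matrix.mul_apply, Matrix.transpose_apply,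
      Fintype.sum_prod_type, Finset.sum_mul, Finset.mul_sum]
  rw [h2]
  simp only [Finset.sum_mul, Finset.mul_sum]
  rw [sum4_swap fun m n i i' => x l i' * unfold1 τ y z i' (m, n) * (u l i * unfold1 τ y z i (m, n))]
  refine Finset.sum_congr rfl fun i _ => Finset.sum_congr rfl fun i' _ =>
    Finset.sum_congr rfl fun m _ => Finset.sum_congr rfl fun n _ => by ring

lemma key2 {m₁ m₂ m₃ p q r : ℕ} (τ : Fin m₁ → Fin m₂ → Fin m₃ → ℝ)
    (x : Fin p → Fin m₁ → ℝ) (y u : Fin q → Fin m₂ → ℝ) (z : Fin r → Fin m₃ → ℝ) :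
    ∑ l, ∑ m, ∑ n, (∑ i, ∑ j, ∑ k, τ i j k * x l i * y m j * z n k) *
        (∑ i, ∑ j, ∑ k, τ i j k * x l i * u m j * z n k)
      = ∑ m, u m ⬝ᵥ (unfold1 (fun j i k => τ i j k) x z *
          (unfold1 (fun j i k => τ i j k) x z)ᵀ).mulVec (y m) := by
  have h := key (fun j i k => τ i j k) y u x z
  rw [← h]
  rw [sc fun l m => ∑ n, (∑ i, ∑ j, ∑ k, τ i j k * x l i * y m j * z n k) *
    (∑ i, ∑ j, ∑ k, τ i j k * x l i * u m j * z n k)]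
  refine Finset.sum_congr rfl fun m _ => Finset.sum_congr rfl fun l _ =>
    Finset.sum_congr rfl fun n _ => ?_
  congr 1
  · rw [sc fun i j => ∑ k, τ i j k * x l i * y m j * z n k]
    refine Finset.sum_congr rfl fun j _ => Finset.sum_congr rfl fun i _ =>
      Finset.sum_congr rfl fun k _ => by ring
  · rw [sc fun i j => ∑ k, τ i j k * x l i * u m j * z n k]
    refine Finset.sum_congr rfl fun j _ => Finset.sum_congr rfl fun i _ =>
      Finset.sum_congr rfl fun k _ => by ring

lemma key3 {m₁ m₂ m₃ p q r : ℕ} (τ : Fin m₁ → Fin m₂ → Fin m₃ → ℝ)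
    (x : Fin p → Fin m₁ → ℝ) (y : Fin q → Fin m₂ → ℝ) (z u : Fin r → Fin m₃ → ℝ) :
    ∑ l, ∑ m, ∑ n, (∑ i, ∑ j, ∑ k, τ i j k * x l i * y m j * z n k) *
        (∑ i, ∑ j, ∑ k, τ i j k * x l i * y m j * u n k)
      = ∑ n, u n ⬝ᵥ (unfold1 (fun k i j => τ i j k) x y *
          (unfold1 (fun k i j => τ i j k) x y)ᵀ).mulVec (z n) := by
  have h := key (fun k i j => τ i j k) z u x y
  rw [← h]
  rw [sum3_rot fun l m n => (∑ i, ∑ j, ∑ k, τ i j k * x l i * y m j * z n k) *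
    (∑ i, ∑ j, ∑ k, τ i j k * x l i * y m j * u n k)]
  refine Finset.sum_congr rfl fun n _ => Finset.sum_congr rfl fun l _ =>
    Finset.sum_congr rfl fun m _ => ?_
  congr 1
  · rw [sum3_rot fun i j k => τ i j k * x l i * y m j * z n k]
    refine Finset.sum_congr rfl fun k _ => Finset.sum_congr rfl fun i _ =>
      Finset.sum_congr rfl fun j _ => by ring
  · rw [sum3_rot fun i j k => τ i j k * x l i * y m j * u n k]
    refine Finset.sum_congr rfl fun k _ => Finset.sum_congr rfl fun i _ =>
      Finset.sum_congr rfl fun j _ => by ring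

lemma deriv_split {m₁ m₂ m₃ p q r : ℕ} (τ : Fin m₁ → Fin m₂ → Fin m₃ → ℝ)
    (x x' : Fin p → Fin m₁ → ℝ) (y y' : Fin q → Fin m₂ → ℝ) (z z' : Fin r → Fin m₃ → ℝ) :
    (∑ l, ∑ m, ∑ n,
        2 * (∑ i, ∑ j, ∑ k, τ i j k * x l i * y m j * z n k) *
        (∑ i, ∑ j, ∑ k, τ i j k *
          (x' l i * y m j * z n k + x l i * y' m j * z n k + x l i * y m j * z' n k)))
      = 2 * (∑ l, x' l ⬝ᵥ (unfold1 τ y z * (unfold1 τ y z)ᵀ).mulVec (x l))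
        + 2 * (∑ m, y' m ⬝ᵥ (unfold1 (fun j i k => τ i j k) x z *
            (unfold1 (fun j i k => τ i j k) x z)ᵀ).mulVec (y m))
        + 2 * (∑ n, z' n ⬝ᵥ (unfold1 (fun k i j => τ i j k) x y *
            (unfold1 (fun k i j => τ i j k) x y)ᵀ).mulVec (z n)) := by
  have hterm : ∀ l m n,
      2 * (∑ i, ∑ j, ∑ k, τ i j k * x l i * y m j * z n k) *
        (∑ i, ∑ j, ∑ k, τ i j k *
          (x' l i * y m j * z n k + x l i * y' m j * z n k + x l i * y m j * z' n k))
      = 2 * ((∑ i, ∑ j, ∑ k, τ i j k * x l i * y m j * z n k) *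
            (∑ i, ∑ j, ∑ k, τ i j k * x' l i * y m j * z n k))
        + 2 * ((∑ i, ∑ j, ∑ k, τ i j k * x l i * y m j * z n k) *
            (∑ i, ∑ j, ∑ k, τ i j k * x l i * y' m j * z n k))
        + 2 * ((∑ i, ∑ j, ∑ k, τ i j k * x l i * y m j * z n k) *
            (∑ i, ∑ j, ∑ k, τ i j k * x l i * y m j * z' n k)) := by
    intro l m n
    have hin : (∑ i, ∑ j, ∑ k, τ i j k *
          (x' l i * y m j * z n k + x l i * y' m j * z n k + x l i * y m j * z' n k))
        = (∑ i, ∑ j, ∑ k, τ i j k * x' l i * y m j * z n k)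
          + (∑ i, ∑ j, ∑ k, τ i j k * x l i * y' m j * z n k)
          + (∑ i, ∑ j, ∑ k, τ i j k * x l i * y m j * z' n k) := by
      have : ∀ (i : Fin m₁) (j : Fin m₂) (k : Fin m₃), τ i j k *
          (x' l i * y m j * z n k + x l i * y' m j * z n k + x l i * y m j * z' n k)
          = τ i j k * x' l i * y m j * z n k + τ i j k * x l i * y' m j * z n k
            + τ i j k * x l i * y m j * z' n k := fun i j k => by ring
      simp only [this, Finset.sum_add_distrib]
    rw [hin]; ring
  simp only [hterm, Finset.sum_add_distrib]
  have pull : ∀ (F : Fin p → Fin q → Fin r → ℝ),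
      (∑ l, ∑ m, ∑ n, 2 * F l m n) = 2 * ∑ l, ∑ m, ∑ n, F l m n := by
    intro F; simp only [← Finset.mul_sum]
  rw [pull fun l m n => (∑ i, ∑ j, ∑ k, τ i j k * x l i * y m j * z n k) *
        (∑ i, ∑ j, ∑ k, τ i j k * x' l i * y m j * z n k),
      pull fun l m n => (∑ i, ∑ j, ∑ k, τ i j k * x l i * y m j * z n k) *
        (∑ i, ∑ j, ∑ k, τ i j k * x l i * y' m j * z n k),
      pull fun l m n => (∑ i, ∑ j, ∑ k, τ i j k * x l i * y m j * z n k) *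
        (∑ i, ∑ j, ∑ k, τ i j k * x l i * y m j * z' n k),
      key τ x x' y z, key2 τ x y y' z, key3 τ x y z z']

lemma dot_sum_smul_right {m p : ℕ} (g : Fin p → ℝ) (x : Fin p → Fin m → ℝ) (v : Fin m → ℝ) :
    v ⬝ᵥ (∑ l, g l • x l) = ∑ l, g l * (v ⬝ᵥ x l) := by
  rw [dotProduct_comm, dot_sum_smul_left]
  exact Finset.sum_congr rfl fun l _ => by rw [dotProduct_comm]

lemma inv_of_eigen {m p : ℕ} (B : Matrix (Fin m) (Fin m) ℝ)
    (x w : Fin p → Fin m → ℝ)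
    (heig : ∀ l, ∃ μ : ℝ, B.mulVec (w l) = μ • w l)
    (hspan : Submodule.span ℝ (Set.range w) = Submodule.span ℝ (Set.range x)) :
    ∀ l, B.mulVec (x l) ∈ Submodule.span ℝ (Set.range x) := by
  intro l
  have hxl : x l ∈ Submodule.span ℝ (Set.range w) := by
    rw [hspan]; exact Submodule.subset_span ⟨l, rfl⟩
  obtain ⟨a, ha⟩ := (Submodule.mem_span_range_iff_exists_fun ℝ).1 hxl
  rw [← ha, mulVec_sum_smul]
  refine Submodule.sum_mem _ fun s _ => ?_
  obtain ⟨μ, hμ⟩ := heig s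
  rw [hμ, smul_smul, ← hspan]
  exact Submodule.smul_mem _ _ (Submodule.subset_span ⟨s, rfl⟩)

lemma term_zero {m p : ℕ} (B : Matrix (Fin m) (Fin m) ℝ) (hB : Bᵀ = B)
    (x x' : Fin p → Fin m → ℝ) (hx : IsOrthonormalFrame x)
    (hinv : ∀ l, B.mulVec (x l) ∈ Submodule.span ℝ (Set.range x))
    (hd : ∀ l s, x' l ⬝ᵥ x s + x l ⬝ᵥ x' s = 0) :
    ∑ l, x' l ⬝ᵥ B.mulVec (x l) = 0 := by
  have hsymm : ∀ v w : Fin m → ℝ, v ⬝ᵥ B.mulVec w = w ⬝ᵥ B.mulVec v := by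
    intro v w
    rw [Matrix.dotProduct_mulVec, ← Matrix.mulVec_transpose, hB, dotProduct_comm]
  set c : Fin p → Fin p → ℝ := fun l s => B.mulVec (x l) ⬝ᵥ x s with hcdef
  set d : Fin p → Fin p → ℝ := fun l s => x' l ⬝ᵥ x s with hddef
  have hcsymm : ∀ l s, c l s = c s l := by
    intro l s
    simp only [hcdef]
    rw [dotProduct_comm, hsymm]
    exact dotProduct_comm _ _
  have hdanti : ∀ l s, d s l = - d l s := by
    intro l s
    have h1 := hd l s
    have h2 : x l ⬝ᵥ x' s = d s l := dotProduct_comm _ _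
    simp only [hddef] at h1 h2 ⊢
    linarith
  have hexp : ∀ l, B.mulVec (x l) = ∑ s, c l s • x s := fun l =>
    mem_span_frame x hx _ (hinv l)
  have hmain : ∑ l, x' l ⬝ᵥ B.mulVec (x l) = ∑ l, ∑ s, c l s * d l s := by
    refine Finset.sum_congr rfl fun l _ => ?_
    rw [hexp l, dot_sum_smul_right]
  rw [hmain]
  have hneg : (∑ l, ∑ s, c l s * d l s) = - ∑ l, ∑ s, c l s * d l s := by
    nth_rewrite 1 [sc fun l s => c l s * d l s]
    have : ∀ s l, c l s * d l s = -(c s l * d s l) := by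
      intro s l
      rw [hcsymm l s, hdanti s l]
      ring
    calc ∑ s, ∑ l, c l s * d l s = ∑ s, ∑ l, -(c s l * d s l) := by
          exact Finset.sum_congr rfl fun s _ => Finset.sum_congr rfl fun l _ => this s l
      _ = - ∑ s, ∑ l, c s l * d s l := by simp [Finset.sum_neg_distrib]
  linarith

lemma proj_perm2 {m₁ m₂ m₃ p q r : ℕ} (τ : Fin m₁ → Fin m₂ → Fin m₃ → ℝ)
    (x : Fin p → Fin m₁ → ℝ) (y : Fin q → Fin m₂ → ℝ) (z : Fin r → Fin m₃ → ℝ) :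
    projNormSq3 τ x y z = projNormSq3 (fun j i k => τ i j k) y x z := by
  unfold projNormSq3
  rw [sc fun l m => ∑ n, (∑ i, ∑ j, ∑ k, τ i j k * x l i * y m j * z n k) ^ 2]
  refine Finset.sum_congr rfl fun m _ => Finset.sum_congr rfl fun l _ =>
    Finset.sum_congr rfl fun n _ => ?_
  congr 1
  rw [sc fun i j => ∑ k, τ i j k * x l i * y m j * z n k]
  exact Finset.sum_congr rfl fun j _ => Finset.sum_congr rfl fun i _ =>
    Finset.sum_congr rfl fun k _ => by ring

lemma proj_perm3 {m₁ m₂ m₃ p q r : ℕ} (τ : Fin m₁ → Fin m₂ → Fin m₃ → ℝ)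
    (x : Fin p → Fin m₁ → ℝ) (y : Fin q → Fin m₂ → ℝ) (z : Fin r → Fin m₃ → ℝ) :
    projNormSq3 τ x y z = projNormSq3 (fun k i j => τ i j k) z x y := by
  unfold projNormSq3
  rw [sum3_rot fun l m n => (∑ i, ∑ j, ∑ k, τ i j k * x l i * y m j * z n k) ^ 2]
  refine Finset.sum_congr rfl fun n _ => Finset.sum_congr rfl fun l _ =>
    Finset.sum_congr rfl fun m _ => ?_
  congr 1
  rw [sum3_rot fun i j k => τ i j k * x l i * y m j * z n k]
  exact Finset.sum_congr rfl fun k _ => Finset.sum_congr rfl fun i _ =>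
    Finset.sum_congr rfl fun j _ => by ring

lemma hasDerivAt_G {m₁ m₂ m₃ p q r : ℕ} (τ : Fin m₁ → Fin m₂ → Fin m₃ → ℝ)
    (cx : ℝ → Fin p → Fin m₁ → ℝ) (cy : ℝ → Fin q → Fin m₂ → ℝ)
    (cz : ℝ → Fin r → Fin m₃ → ℝ)
    (hdx : ∀ l j, Differentiable ℝ fun t => cx t l j)
    (hdy : ∀ l j, Differentiable ℝ fun t => cy t l j)
    (hdz : ∀ l j, Differentiable ℝ fun t => cz t l j)
    (l : Fin p) (m : Fin q) (n : Fin r) (t₀ : ℝ) :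
    HasDerivAt (fun t => ∑ i, ∑ j, ∑ k, τ i j k * cx t l i * cy t m j * cz t n k)
      (∑ i, ∑ j, ∑ k, τ i j k *
        (deriv (fun t => cx t l i) t₀ * cy t₀ m j * cz t₀ n k
          + cx t₀ l i * deriv (fun t => cy t m j) t₀ * cz t₀ n k
          + cx t₀ l i * cy t₀ m j * deriv (fun t => cz t n k) t₀)) t₀ := by
  refine HasDerivAt.fun_sum fun i _ => ?_
  refine HasDerivAt.fun_sum fun j _ => ?_
  refine HasDerivAt.fun_sum fun k _ => ?_
  have hx := (hdx l i t₀).hasDerivAt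
  have hy := (hdy m j t₀).hasDerivAt
  have hz := (hdz n k t₀).hasDerivAt
  have h := ((hx.const_mul (τ i j k)).fun_mul hy).fun_mul hz
  exact h.congr_deriv (by ring)

lemma hasDerivAt_F {m₁ m₂ m₃ p q r : ℕ} (τ : Fin m₁ → Fin m₂ → Fin m₃ → ℝ)
    (cx : ℝ → Fin p → Fin m₁ → ℝ) (cy : ℝ → Fin q → Fin m₂ → ℝ)
    (cz : ℝ → Fin r → Fin m₃ → ℝ)
    (hdx : ∀ l j, Differentiable ℝ fun t => cx t l j)
    (hdy : ∀ l j, Differentiable ℝ fun t => cy t l j)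
    (hdz : ∀ l j, Differentiable ℝ fun t => cz t l j) (t₀ : ℝ) :
    HasDerivAt (fun t => projNormSq3 τ (cx t) (cy t) (cz t))
      (∑ l, ∑ m, ∑ n,
        2 * (∑ i, ∑ j, ∑ k, τ i j k * cx t₀ l i * cy t₀ m j * cz t₀ n k) *
        (∑ i, ∑ j, ∑ k, τ i j k *
          (deriv (fun t => cx t l i) t₀ * cy t₀ m j * cz t₀ n k
            + cx t₀ l i * deriv (fun t => cy t m j) t₀ * cz t₀ n k
            + cx t₀ l i * cy t₀ m j * deriv (fun t => cz t n k) t₀))) t₀ := by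
  unfold projNormSq3
  refine HasDerivAt.fun_sum fun l _ => HasDerivAt.fun_sum fun m _ => HasDerivAt.fun_sum fun n _ => ?_
  have hG := hasDerivAt_G τ cx cy cz hdx hdy hdz l m n t₀
  have h := hG.fun_pow 2
  exact h.congr_deriv (by push_cast; ring)


lemma orth_deriv {m p : ℕ} (cx : ℝ → Fin p → Fin m → ℝ)
    (hdx : ∀ l j, Differentiable ℝ fun t => cx t l j)
    (hfx : ∀ t, IsOrthonormalFrame (cx t)) :
    ∀ l s, (fun i => deriv (fun t => cx t l i) 0) ⬝ᵥ cx 0 s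
      + cx 0 l ⬝ᵥ (fun i => deriv (fun t => cx t s i) 0) = 0 := by
  intro l s
  have hd : HasDerivAt (fun t => cx t l ⬝ᵥ cx t s)
      (∑ i, (deriv (fun t => cx t l i) 0 * cx 0 s i
        + cx 0 l i * deriv (fun t => cx t s i) 0)) 0 := by
    have : ∀ t : ℝ, cx t l ⬝ᵥ cx t s = ∑ i, cx t l i * cx t s i := fun t => rfl
    simp only [this]
    exact HasDerivAt.fun_sum fun i _ => ((hdx l i 0).hasDerivAt.mul (hdx s i 0).hasDerivAt)
  have hconst : (fun t => cx t l ⬝ᵥ cx t s) = fun _ : ℝ => (if l = s then (1:ℝ) else 0) :=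
    funext fun t => hfx t l s
  rw [hconst] at hd
  have h0 := (hasDerivAt_const (0:ℝ) (if l = s then (1:ℝ) else 0)).unique hd
  have : (fun i => deriv (fun t => cx t l i) 0) ⬝ᵥ cx 0 s
      + cx 0 l ⬝ᵥ (fun i => deriv (fun t => cx t s i) 0)
      = ∑ i, (deriv (fun t => cx t l i) 0 * cx 0 s i
        + cx 0 l i * deriv (fun t => cx t s i) 0) := by
    rw [Finset.sum_add_distrib]; rfl
  rw [this, ← h0]

lemma crit1 {m₁ m₂ m₃ p q r : ℕ} (τ : Fin m₁ → Fin m₂ → Fin m₃ → ℝ)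
    (x : Fin p → Fin m₁ → ℝ) (hx : IsOrthonormalFrame x)
    (y : Fin q → Fin m₂ → ℝ) (z : Fin r → Fin m₃ → ℝ)
    (H : ∀ (cx : ℝ → Fin p → Fin m₁ → ℝ),
      (∀ l j, Differentiable ℝ fun t => cx t l j) →
      (∀ t, IsOrthonormalFrame (cx t)) → cx 0 = x →
      deriv (fun t => projNormSq3 τ (cx t) y z) 0 = 0) :
    ∀ l, (unfold1 τ y z * (unfold1 τ y z)ᵀ).mulVec (x l) ∈
      Submodule.span ℝ (Set.range x) := by
  intro l₀
  have hx' : ∀ s t, x s ⬝ᵥ x t = if s = t then (1 : ℝ) else 0 := hx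
  set B : Matrix (Fin m₁) (Fin m₁) ℝ := unfold1 τ y z * (unfold1 τ y z)ᵀ with hBdef
  set Bv : Fin m₁ → ℝ := B.mulVec (x l₀) with hBv
  set v : Fin m₁ → ℝ := Bv - ∑ s, (Bv ⬝ᵥ x s) • x s with hvdef
  have hvx : ∀ s, v ⬝ᵥ x s = 0 := by
    intro s
    simp only [hvdef, sub_dotProduct, dot_sum_smul_left]
    simp [hx', mul_ite, Finset.sum_ite_eq']
  have hvBv : v ⬝ᵥ Bv = v ⬝ᵥ v := by
    have hBveq : Bv = v + ∑ s, (Bv ⬝ᵥ x s) • x s := by rw [hvdef]; abel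
    nth_rewrite 1 [hBveq]
    rw [dotProduct_add, dot_sum_smul_right]
    simp [hvx]
  have key0 : v ⬝ᵥ Bv = 0 := by
    by_cases hvz : v = 0
    · simp [hvz]
    · set c : ℝ := v ⬝ᵥ v with hcdef
      have hcpos : 0 < c := by
        rcases lt_or_eq_of_le (Finset.sum_nonneg fun i _ => mul_self_nonneg (v i)) with h | h
        · exact h
        · exact absurd (dotProduct_self_eq_zero.mp h.symm) hvz
      have hsq : Real.sqrt c ≠ 0 := by positivity
      set e : Fin m₁ → ℝ := (Real.sqrt c)⁻¹ • v with hedef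
      have hee : e ⬝ᵥ e = 1 := by
        rw [hedef, smul_dotProduct, dotProduct_smul, smul_eq_mul, smul_eq_mul,
          ← hcdef, ← mul_assoc, ← mul_inv, Real.mul_self_sqrt hcpos.le]
        field_simp
      have hex : ∀ s, e ⬝ᵥ x s = 0 := by
        intro s
        rw [hedef, smul_dotProduct, hvx s, smul_zero]
      have hxe : ∀ s, x s ⬝ᵥ e = 0 := fun s => by
        rw [dotProduct_comm]; exact hex s
      set cx : ℝ → Fin p → Fin m₁ → ℝ :=
        fun t l => if l = l₀ then Real.cos t • x l₀ + Real.sin t • e else x l with hcx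
      have hcombo : ∀ t, (Real.cos t • x l₀ + Real.sin t • e) ⬝ᵥ
          (Real.cos t • x l₀ + Real.sin t • e) = 1 := by
        intro t
        have h1 := hx' l₀ l₀
        rw [if_pos rfl] at h1
        simp only [add_dotProduct, dotProduct_add, smul_dotProduct,
          dotProduct_smul, smul_eq_mul, h1, hee, hex, hxe, mul_one, mul_zero,
          add_zero, zero_add]
        nlinarith [Real.sin_sq_add_cos_sq t]
      have hcombo2 : ∀ (t : ℝ) (s : Fin p), l₀ ≠ s →
          (Real.cos t • x l₀ + Real.sin t • e) ⬝ᵥ x s = 0 := by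
        intro t s h
        have h1 := hx' l₀ s
        rw [if_neg h] at h1
        simp only [add_dotProduct, smul_dotProduct, smul_eq_mul, h1, hex,
          mul_zero, add_zero]
      have hcombo3 : ∀ (t : ℝ) (s : Fin p), l₀ ≠ s →
          x s ⬝ᵥ (Real.cos t • x l₀ + Real.sin t • e) = 0 := fun t s h => by
        rw [dotProduct_comm]; exact hcombo2 t s h
      have hdiff : ∀ l i, Differentiable ℝ fun t => cx t l i := by
        intro l i
        by_cases h : l = l₀ <;> simp only [hcx, h, if_true, if_false]
        · simp only [Pi.add_apply, Pi.smul_apply, smul_eq_mul]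
          exact (Real.differentiable_cos.mul_const _).add
            (Real.differentiable_sin.mul_const _)
        · exact differentiable_const _
      have hframe : ∀ t, IsOrthonormalFrame (cx t) := by
        intro t s s'
        by_cases h1 : s = l₀ <;> by_cases h2 : s' = l₀
        · rw [h1, h2]
          simp [hcx, hcombo t]
        · have h2' : (l₀ : Fin p) ≠ s' := fun hh => h2 hh.symm
          rw [h1]
          simp [hcx, h2, h2', hcombo2 t s' h2']
        · have h1' : (l₀ : Fin p) ≠ s := fun hh => h1 hh.symm
          rw [h2]
          simp [hcx, h1, h1', hcombo3 t s h1']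
        · simp [hcx, h1, h2, hx' s s']
      have hc0 : cx 0 = x := by
        funext l i
        by_cases h : l = l₀
        · subst h
          simp [hcx]
        · simp [hcx, h]
      have hderiv : ∀ l i, deriv (fun t => cx t l i) 0 = if l = l₀ then e i else 0 := by
        intro l i
        by_cases h : l = l₀
        · subst h
          have hd : HasDerivAt (fun t => Real.cos t * x l i + Real.sin t * e i)
              (-Real.sin 0 * x l i + Real.cos 0 * e i) 0 :=
            ((Real.hasDerivAt_cos 0).mul_const _).add ((Real.hasDerivAt_sin 0).mul_const _)
          simp only [hcx, if_pos rfl, Pi.add_apply, Pi.smul_apply, smul_eq_mul]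
          rw [hd.deriv]
          simp
        · simp [hcx, h]
      have hD := hasDerivAt_F τ cx (fun _ => y) (fun _ => z) hdiff
        (fun l j => differentiable_const _) (fun l j => differentiable_const _) 0
      have hF0 := H cx hdiff hframe hc0
      have hDval := hD.deriv
      rw [hF0] at hDval
      have hsplit := deriv_split τ x (fun l i => if l = l₀ then e i else 0) y
        (fun _ _ => (0:ℝ)) z (fun _ _ => (0:ℝ))
      have hzero : ∀ (N : ℕ) (u : Fin N → ℝ), (fun _ => (0:ℝ)) ⬝ᵥ u = 0 := by
        intro N u; simp [dotProduct]
      simp only [mul_zero, zero_mul, add_zero, hzero, Finset.sum_const_zero] at hsplit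
      simp only [hc0, hderiv, deriv_const, mul_zero, zero_mul, add_zero] at hDval
      rw [← hBdef] at hsplit
      have hDeq : (0:ℝ) = 2 * ∑ l, (fun i => if l = l₀ then e i else 0) ⬝ᵥ B.mulVec (x l) :=
        hDval.trans hsplit
      have hsum : ∑ l, (fun i => if l = l₀ then e i else 0) ⬝ᵥ B.mulVec (x l) = e ⬝ᵥ Bv := by
        have hterm : ∀ l, (fun i => if l = l₀ then e i else 0) ⬝ᵥ B.mulVec (x l)
            = if l = l₀ then e ⬝ᵥ B.mulVec (x l) else 0 := by
          intro l
          by_cases h : l = l₀ <;> simp [h, dotProduct]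
        simp only [hterm]
        simp [Finset.sum_ite_eq', hBv]
      rw [hsum] at hDeq
      have heBv : e ⬝ᵥ Bv = 0 := by linarith
      rw [hedef, smul_dotProduct, smul_eq_mul] at heBv
      rcases mul_eq_zero.mp heBv with h | h
      · exact absurd h (inv_ne_zero hsq)
      · exact h
  rw [hvBv] at key0
  have hv0 : v = 0 := dotProduct_self_eq_zero.mp key0
  have hBveq : Bv = ∑ s, (Bv ⬝ᵥ x s) • x s := sub_eq_zero.mp (hvdef ▸ hv0)
  rw [hBveq]
  exact Submodule.sum_mem _ fun s _ =>
    Submodule.smul_mem _ _ (Submodule.subset_span ⟨s, rfl⟩)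

/-- `(U,V,W)` is a critical point of `(X,Y,Z) ↦ ‖P_{X⊗Y⊗Z}(τ)‖²` on
`Gr(p,ℝ^{m₁})×Gr(q,ℝ^{m₂})×Gr(r,ℝ^{m₃})` (criticality tested along differentiable
curves of orthonormal frames) iff `U` is spanned by `p` left singular vectors of
`τ(V,W)`, `V` by `q` left singular vectors of `τ(U,W)`, and `W` by `r` left singular
vectors of `τ(U,V)`. -/
theorem critical_point_characterization_3tensor (m₁ m₂ m₃ p q r : ℕ)
    (hp : p ≤ m₁) (hq : q ≤ m₂) (hr : r ≤ m₃)
    (τ : Fin m₁ → Fin m₂ → Fin m₃ → ℝ) (hτ : τ ≠ 0)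
    (x : Fin p → Fin m₁ → ℝ) (hx : IsOrthonormalFrame x)
    (y : Fin q → Fin m₂ → ℝ) (hy : IsOrthonormalFrame y)
    (z : Fin r → Fin m₃ → ℝ) (hz : IsOrthonormalFrame z) :
    (∀ (cx : ℝ → Fin p → Fin m₁ → ℝ) (cy : ℝ → Fin q → Fin m₂ → ℝ)
        (cz : ℝ → Fin r → Fin m₃ → ℝ),
      (∀ l j, Differentiable ℝ fun t => cx t l j) →
      (∀ l j, Differentiable ℝ fun t => cy t l j) →
      (∀ l j, Differentiable ℝ fun t => cz t l j) →
      (∀ t, IsOrthonormalFrame (cx t)) → (∀ t, IsOrthonormalFrame (cy t)) →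
      (∀ t, IsOrthonormalFrame (cz t)) →
      cx 0 = x → cy 0 = y → cz 0 = z →
      deriv (fun t => projNormSq3 τ (cx t) (cy t) (cz t)) 0 = 0) ↔
    ((∃ w : Fin p → Fin m₁ → ℝ, LinearIndependent ℝ w ∧
        (∀ l, ∃ μ : ℝ, (unfold1 τ y z * (unfold1 τ y z)ᵀ).mulVec (w l) = μ • w l) ∧
        Submodule.span ℝ (Set.range w) = Submodule.span ℝ (Set.range x)) ∧
     (∃ w : Fin q → Fin m₂ → ℝ, LinearIndependent ℝ w ∧
        (∀ l, ∃ μ : ℝ, (unfold1 (fun j i k => τ i j k) x z *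
            (unfold1 (fun j i k => τ i j k) x z)ᵀ).mulVec (w l) = μ • w l) ∧
        Submodule.span ℝ (Set.range w) = Submodule.span ℝ (Set.range y)) ∧
     (∃ w : Fin r → Fin m₃ → ℝ, LinearIndependent ℝ w ∧
        (∀ l, ∃ μ : ℝ, (unfold1 (fun k i j => τ i j k) x y *
            (unfold1 (fun k i j => τ i j k) x y)ᵀ).mulVec (w l) = μ • w l) ∧
        Submodule.span ℝ (Set.range w) = Submodule.span ℝ (Set.range z))) := by
  have hsym1 : (unfold1 τ y z * (unfold1 τ y z)ᵀ)ᵀ = unfold1 τ y z * (unfold1 τ y z)ᵀ := by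
    rw [Matrix.transpose_mul, Matrix.transpose_transpose]
  have hsym2 : (unfold1 (fun j i k => τ i j k) x z * (unfold1 (fun j i k => τ i j k) x z)ᵀ)ᵀ
      = unfold1 (fun j i k => τ i j k) x z * (unfold1 (fun j i k => τ i j k) x z)ᵀ := by
    rw [Matrix.transpose_mul, Matrix.transpose_transpose]
  have hsym3 : (unfold1 (fun k i j => τ i j k) x y * (unfold1 (fun k i j => τ i j k) x y)ᵀ)ᵀ
      = unfold1 (fun k i j => τ i j k) x y * (unfold1 (fun k i j => τ i j k) x y)ᵀ := by
    rw [Matrix.transpose_mul, Matrix.transpose_transpose]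
  constructor
  · intro Hbig
    refine ⟨?_, ?_, ?_⟩
    · refine spectral _ hsym1 x hx (crit1 τ x hx y z ?_)
      intro cx hdx hfx hcx0
      exact Hbig cx (fun _ => y) (fun _ => z) hdx (fun l j => differentiable_const _)
        (fun l j => differentiable_const _) hfx (fun _ => hy) (fun _ => hz) hcx0 rfl rfl
    · refine spectral _ hsym2 y hy (crit1 (fun j i k => τ i j k) y hy x z ?_)
      intro cy hdy hfy hcy0
      have h := Hbig (fun _ => x) cy (fun _ => z) (fun l j => differentiable_const _) hdy
        (fun l j => differentiable_const _) (fun _ => hx) hfy (fun _ => hz) rfl hcy0 rfl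
      have heq : (fun t => projNormSq3 (fun j i k => τ i j k) (cy t) x z)
          = fun t => projNormSq3 τ x (cy t) z :=
        funext fun t => (proj_perm2 τ x (cy t) z).symm
      rw [heq]
      exact h
    · refine spectral _ hsym3 z hz (crit1 (fun k i j => τ i j k) z hz x y ?_)
      intro cz hdz hfz hcz0
      have h := Hbig (fun _ => x) (fun _ => y) cz (fun l j => differentiable_const _)
        (fun l j => differentiable_const _) hdz (fun _ => hx) (fun _ => hy) hfz rfl rfl hcz0
      have heq : (fun t => projNormSq3 (fun k i j => τ i j k) (cz t) x y)
          = fun t => projNormSq3 τ x y (cz t) :=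
        funext fun t => (proj_perm3 τ x y (cz t)).symm
      rw [heq]
      exact h
  · rintro ⟨⟨w1, -, heig1, hspan1⟩, ⟨w2, -, heig2, hspan2⟩, ⟨w3, -, heig3, hspan3⟩⟩
    intro cx cy cz hdx hdy hdz hfx hfy hfz hcx0 hcy0 hcz0
    have hD := (hasDerivAt_F τ cx cy cz hdx hdy hdz 0).deriv
    rw [hD]
    simp only [hcx0, hcy0, hcz0]
    have hs := deriv_split τ x (fun l i => deriv (fun t => cx t l i) 0) y
      (fun m j => deriv (fun t => cy t m j) 0) z (fun n k => deriv (fun t => cz t n k) 0)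
    rw [hs]
    have hz1 : (∑ l, (fun i => deriv (fun t => cx t l i) 0) ⬝ᵥ
        (unfold1 τ y z * (unfold1 τ y z)ᵀ).mulVec (x l)) = 0 := by
      refine term_zero _ hsym1 x _ hx (inv_of_eigen _ x w1 heig1 hspan1) ?_
      have := orth_deriv cx hdx hfx
      rw [hcx0] at this
      exact this
    have hz2 : (∑ m, (fun j => deriv (fun t => cy t m j) 0) ⬝ᵥ
        (unfold1 (fun j i k => τ i j k) x z *
          (unfold1 (fun j i k => τ i j k) x z)ᵀ).mulVec (y m)) = 0 := by
      refine term_zero _ hsym2 y _ hy (inv_of_eigen _ y w2 heig2 hspan2) ?_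
      have := orth_deriv cy hdy hfy
      rw [hcy0] at this
      exact this
    have hz3 : (∑ n, (fun k => deriv (fun t => cz t n k) 0) ⬝ᵥ
        (unfold1 (fun k i j => τ i j k) x y *
          (unfold1 (fun k i j => τ i j k) x y)ᵀ).mulVec (z n)) = 0 := by
      refine term_zero _ hsym3 z _ hz (inv_of_eigen _ z w3 heig3 hspan3) ?_
      have := orth_deriv cz hdz hfz
      rw [hcz0] at this
      exact this
    rw [hz1, hz2, hz3]
    ring
end

section
/- In the relaxation algorithm where, given subspaces (X_i, Y_i, Z_i), one successively replaces X_{i+1} by the span of the p top left singular vectors of τ(Y_i,Z_i), Y_{i+1} by the span of the q top left singular vectors of τ(X_{i+1},Z_i), and Z_{i+1} by the span of the r top left singular vectors of τ(X_{i+1},Y_{i+1}), the objective ‖P_{X⊗Y⊗Z}(τ)‖² is monotonically non-decreasing along the iterates: ‖P_{X_i⊗Y_i⊗Z_i}(τ)‖² ≤ ‖P_{X_{i+1}⊗Y_i⊗Z_i}(τ)‖² ≤ ‖P_{X_{i+1}⊗Y_{i+1}⊗Z_i}(τ)‖² ≤ ‖P_{X_{i+1}⊗Y_{i+1}⊗Z_{i+1}}(τ)‖².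 -/
open Matrix

/-- `x'` is a frame of top-`p` left singular vectors of the operator with unfolding
matrix `A`: the `x' l` are eigenvectors of `A Aᵀ` with eigenvalues `μ l`, and the
Rayleigh quotient of `A Aᵀ` on the orthogonal complement of the frame is at most
`min_l μ l`. -/
def IsTopSingularFrame {m p : ℕ} {n : Type*} [Fintype n] (A : Matrix (Fin m) n ℝ)
    (x' : Fin p → Fin m → ℝ) (μ : Fin p → ℝ) : Prop :=
  IsOrthonormalFrame x' ∧
  (∀ l, (A * Aᵀ).mulVec (x' l) = μ l • x' l) ∧
  (∀ v : Fin m → ℝ, (∀ l, v ⬝ᵥ x' l = 0) →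
    v ⬝ᵥ (A * Aᵀ).mulVec v ≤ (⨅ l, μ l) * (v ⬝ᵥ v))

lemma swap3 {α β γ : Type*} [Fintype α] [Fintype β] [Fintype γ] (f : α → β → γ → ℝ) :
    ∑ i, ∑ j, ∑ c, f i j c = ∑ c, ∑ i, ∑ j, f i j c :=
  calc ∑ i, ∑ j, ∑ c, f i j c
      = ∑ i, ∑ c, ∑ j, f i j c := Finset.sum_congr rfl fun _ _ => Finset.sum_comm
    _ = ∑ c, ∑ i, ∑ j, f i j c := Finset.sum_comm

lemma dot_AAt {m : ℕ} {n : Type*} [Fintype n] (A : Matrix (Fin m) n ℝ) (v : Fin m → ℝ) :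
    v ⬝ᵥ (A * Aᵀ).mulVec v = ∑ c, (∑ i, A i c * v i) ^ 2 := by
  have key : ∀ c : n, (∑ i, A i c * v i) ^ 2 = ∑ i, ∑ j, v i * (A i c * A j c * v j) := by
    intro c
    rw [pow_two, Finset.sum_mul]
    refine Finset.sum_congr rfl fun i _ => ?_
    rw [Finset.mul_sum]
    exact Finset.sum_congr rfl fun j _ => by ring
  simp only [dotProduct, Matrix.mulVec, Matrix.mul_apply, Matrix.transpose_apply, dotProduct,
    Finset.mul_sum, Finset.sum_mul, key]
  exact swap3 (fun i j c => v i * (A i c * A j c * v j))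

lemma dot_sum_right {m p : ℕ} (f : Fin p → Fin m → ℝ) (v : Fin m → ℝ) :
    v ⬝ᵥ (∑ j, f j) = ∑ j, v ⬝ᵥ f j := by
  simp only [dotProduct, Finset.sum_apply, Finset.mul_sum]
  exact Finset.sum_comm

lemma dot_sum_left {m p : ℕ} (f : Fin p → Fin m → ℝ) (v : Fin m → ℝ) :
    (∑ j, f j) ⬝ᵥ v = ∑ j, f j ⬝ᵥ v := by
  rw [dotProduct_comm, dot_sum_right]
  exact Finset.sum_congr rfl fun j _ => dotProduct_comm _ _

lemma mulVec_sum' {m p : ℕ} (M : Matrix (Fin m) (Fin m) ℝ)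
    (f : Fin p → Fin m → ℝ) : M.mulVec (∑ j, f j) = ∑ j, M.mulVec (f j) := by
  ext i
  simp only [Matrix.mulVec, dotProduct, Finset.sum_apply, Finset.mul_sum]
  exact Finset.sum_comm

lemma sum_eig {m p : ℕ} {n : Type*} [Fintype n] {A : Matrix (Fin m) n ℝ}
    {x' : Fin p → Fin m → ℝ} {μ : Fin p → ℝ} (h : IsTopSingularFrame A x' μ) :
    ∑ l, x' l ⬝ᵥ (A * Aᵀ).mulVec (x' l) = ∑ l, μ l := by
  refine Finset.sum_congr rfl fun l _ => ?_
  rw [h.2.1 l, dotProduct_smul, h.1 l l, if_pos rfl]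
  simp

lemma frame_dot_sum {m p : ℕ} {e : Fin p → Fin m → ℝ} (he : IsOrthonormalFrame e)
    (a b : Fin p → ℝ) :
    (∑ l, a l • e l) ⬝ᵥ (∑ l', b l' • e l') = ∑ l, a l * b l := by
  have he' : ∀ s t, e s ⬝ᵥ e t = if s = t then (1 : ℝ) else 0 := he
  rw [dot_sum_left]
  refine Finset.sum_congr rfl fun l _ => ?_
  rw [smul_dotProduct, dot_sum_right]
  simp only [dotProduct_smul, smul_eq_mul, he', mul_ite, mul_one, mul_zero]
  rw [Finset.sum_ite_eq Finset.univ l b]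
  simp

/-- The main analytic lemma. -/
lemma sum_rayleigh_le {m p : ℕ} {n : Type*} [Fintype n] (A : Matrix (Fin m) n ℝ)
    {x x' : Fin p → Fin m → ℝ} {μ : Fin p → ℝ}
    (hx : IsOrthonormalFrame x) (h : IsTopSingularFrame A x' μ) :
    ∑ l, x l ⬝ᵥ (A * Aᵀ).mulVec (x l) ≤ ∑ l, μ l := by
  obtain ⟨hon, heig, hres⟩ := h
  rcases Nat.eq_zero_or_pos p with hp | hp
  · subst hp; simp
  have : Nonempty (Fin p) := Fin.pos_iff_nonempty.mp hp
  set μ₀ := ⨅ l, μ l with hμ₀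
  have hμ₀le : ∀ j, μ₀ ≤ μ j := fun j =>
    ciInf_le (Set.Finite.bddBelow (Set.finite_range μ)) j
  set M := A * Aᵀ with hM
  have hMsym : Mᵀ = M := by rw [hM, Matrix.transpose_mul, Matrix.transpose_transpose]
  have hsym : ∀ v w : Fin m → ℝ, v ⬝ᵥ M.mulVec w = M.mulVec v ⬝ᵥ w := by
    intro v w
    rw [Matrix.dotProduct_mulVec, ← Matrix.mulVec_transpose, hMsym]
  set c : Fin p → Fin p → ℝ := fun l j => x l ⬝ᵥ x' j with hc
  set u : Fin p → Fin m → ℝ := fun l => ∑ j, c l j • x' j with hu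
  set w : Fin p → Fin m → ℝ := fun l => x l - u l with hw
  have hu_dot : ∀ l j, u l ⬝ᵥ x' j = c l j := by
    intro l j
    have hon' : ∀ s t, x' s ⬝ᵥ x' t = if s = t then (1 : ℝ) else 0 := hon
    show (∑ j', c l j' • x' j') ⬝ᵥ x' j = c l j
    rw [dot_sum_left]
    simp only [smul_dotProduct, smul_eq_mul, hon', mul_ite, mul_one, mul_zero]
    rw [Finset.sum_ite_eq' Finset.univ j (c l)]
    simp
  have hw_orth : ∀ l j, w l ⬝ᵥ x' j = 0 := by
    intro l j
    show (x l - u l) ⬝ᵥ x' j = 0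
    rw [sub_dotProduct, hu_dot]
    exact sub_self _
  have hMu : ∀ l, M.mulVec (u l) = ∑ j, (c l j * μ j) • x' j := by
    intro l
    show M.mulVec (∑ j, c l j • x' j) = _
    rw [mulVec_sum']
    refine Finset.sum_congr rfl fun j _ => ?_
    rw [Matrix.mulVec_smul, heig j, smul_smul]
  have hQu : ∀ l, u l ⬝ᵥ M.mulVec (u l) = ∑ j, μ j * (c l j) ^ 2 := by
    intro l
    rw [hMu, dot_sum_right]
    refine Finset.sum_congr rfl fun j _ => ?_
    rw [dotProduct_smul, smul_eq_mul, hu_dot]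
    ring
  have huMw : ∀ l, u l ⬝ᵥ M.mulVec (w l) = 0 := by
    intro l
    rw [hsym, hMu, dotProduct_comm, dot_sum_right]
    refine Finset.sum_eq_zero fun j _ => ?_
    rw [dotProduct_smul, hw_orth, smul_zero]
  have hwMu : ∀ l, w l ⬝ᵥ M.mulVec (u l) = 0 := by
    intro l
    rw [hMu, dot_sum_right]
    refine Finset.sum_eq_zero fun j _ => ?_
    rw [dotProduct_smul, hw_orth, smul_zero]
  have hQx : ∀ l, x l ⬝ᵥ M.mulVec (x l)
      = (∑ j, μ j * (c l j) ^ 2) + w l ⬝ᵥ M.mulVec (w l) := by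
    intro l
    have hxl : x l = u l + w l := by show x l = u l + (x l - u l); ring
    rw [hxl, Matrix.mulVec_add, dotProduct_add, add_dotProduct, add_dotProduct,
      hQu, huMw, hwMu]
    ring
  have hux : ∀ l, u l ⬝ᵥ x l = ∑ j, (c l j) ^ 2 := by
    intro l
    show (∑ j, c l j • x' j) ⬝ᵥ x l = _
    rw [dot_sum_left]
    refine Finset.sum_congr rfl fun j _ => ?_
    rw [smul_dotProduct, smul_eq_mul, dotProduct_comm]
    exact (pow_two (c l j)).symm
  have huu : ∀ l, u l ⬝ᵥ u l = ∑ j, (c l j) ^ 2 := by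
    intro l
    show (∑ j, c l j • x' j) ⬝ᵥ (∑ j', c l j' • x' j') = _
    rw [frame_dot_sum hon]
    exact Finset.sum_congr rfl fun j _ => (pow_two (c l j)).symm
  have hww : ∀ l, w l ⬝ᵥ w l = 1 - ∑ j, (c l j) ^ 2 := by
    intro l
    show (x l - u l) ⬝ᵥ (x l - u l) = _
    rw [sub_dotProduct, dotProduct_sub, dotProduct_sub, hx l l, if_pos rfl,
      dotProduct_comm (x l) (u l), hux, huu]
    ring
  have hQw : ∀ l, w l ⬝ᵥ M.mulVec (w l) ≤ μ₀ * (1 - ∑ j, (c l j) ^ 2) := by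
    intro l
    have := hres (w l) (hw_orth l)
    rwa [hww l] at this
  have hbessel : ∀ j, ∑ l, (c l j) ^ 2 ≤ 1 := by
    intro j
    set d : Fin m → ℝ := x' j - ∑ l, c l j • x l with hd
    have hdd : 0 ≤ d ⬝ᵥ d := Finset.sum_nonneg fun i _ => mul_self_nonneg _
    have h2 : x' j ⬝ᵥ (∑ l, c l j • x l) = ∑ l, (c l j) ^ 2 := by
      rw [dot_sum_right]
      refine Finset.sum_congr rfl fun l _ => ?_
      rw [dotProduct_smul, smul_eq_mul, dotProduct_comm]
      exact (pow_two (c l j)).symm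
    have h3 : (∑ l, c l j • x l) ⬝ᵥ x' j = ∑ l, (c l j) ^ 2 := by
      rw [dotProduct_comm]; exact h2
    have h4 : (∑ l, c l j • x l) ⬝ᵥ (∑ l', c l' j • x l') = ∑ l, (c l j) ^ 2 := by
      rw [frame_dot_sum hx]
      exact Finset.sum_congr rfl fun l _ => (pow_two (c l j)).symm
    have hexp : d ⬝ᵥ d = 1 - ∑ l, (c l j) ^ 2 := by
      show (x' j - ∑ l, c l j • x l) ⬝ᵥ (x' j - ∑ l, c l j • x l) = _
      rw [sub_dotProduct, dotProduct_sub, dotProduct_sub, h2, h3, h4,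
        hon j j, if_pos rfl]
      ring
    rw [hexp] at hdd
    linarith
  calc ∑ l, x l ⬝ᵥ M.mulVec (x l)
      = ∑ l, ((∑ j, μ j * (c l j) ^ 2) + w l ⬝ᵥ M.mulVec (w l)) :=
        Finset.sum_congr rfl fun l _ => hQx l
    _ ≤ ∑ l, ((∑ j, μ j * (c l j) ^ 2) + μ₀ * (1 - ∑ j, (c l j) ^ 2)) :=
        Finset.sum_le_sum fun l _ => add_le_add_right (hQw l) _
    _ = (∑ j, μ j * ∑ l, (c l j) ^ 2) + μ₀ * ((p : ℝ) - ∑ j, ∑ l, (c l j) ^ 2) := by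
        rw [Finset.sum_add_distrib]
        congr 1
        · rw [Finset.sum_comm]
          exact Finset.sum_congr rfl fun j _ => (Finset.mul_sum _ _ _).symm
        · rw [← Finset.mul_sum]
          congr 1
          rw [Finset.sum_sub_distrib, Finset.sum_const, Finset.card_univ, Fintype.card_fin,
            Finset.sum_comm]
          simp
    _ ≤ ∑ j, μ j := by
        have hterm : ∀ j : Fin p, 0 ≤ (μ j - μ₀) * (1 - ∑ l, (c l j) ^ 2) := fun j =>
          mul_nonneg (sub_nonneg.2 (hμ₀le j)) (sub_nonneg.2 (hbessel j))
        have hpos : 0 ≤ ∑ j, (μ j - μ₀) * (1 - ∑ l, (c l j) ^ 2) :=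
          Finset.sum_nonneg fun j _ => hterm j
        have hexp : ∑ j, (μ j - μ₀) * (1 - ∑ l, (c l j) ^ 2)
            = (∑ j, μ j) - (∑ j, μ j * ∑ l, (c l j) ^ 2)
              - (p : ℝ) * μ₀ + μ₀ * ∑ j, ∑ l, (c l j) ^ 2 := by
          rw [Finset.sum_congr rfl (fun j _ =>
            (by ring : (μ j - μ₀) * (1 - ∑ l, (c l j) ^ 2)
              = μ j - μ j * ∑ l, (c l j) ^ 2 - μ₀ + μ₀ * ∑ l, (c l j) ^ 2))]
          rw [Finset.sum_add_distrib, Finset.sum_sub_distrib, Finset.sum_sub_distrib,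
            ← Finset.mul_sum, Finset.sum_const, Finset.card_univ, Fintype.card_fin,
            nsmul_eq_mul]
        rw [hexp] at hpos
        linarith

lemma projNormSq3_eq_x {m₁ m₂ m₃ p q r : ℕ} (τ : Fin m₁ → Fin m₂ → Fin m₃ → ℝ)
    (x : Fin p → Fin m₁ → ℝ) (y : Fin q → Fin m₂ → ℝ) (z : Fin r → Fin m₃ → ℝ) :
    projNormSq3 τ x y z = ∑ l, x l ⬝ᵥ (unfold1 τ y z * (unfold1 τ y z)ᵀ).mulVec (x l) := by
  simp only [projNormSq3, dot_AAt]
  refine Finset.sum_congr rfl fun l _ => ?_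
  conv_rhs => rw [Fintype.sum_prod_type]
  refine Finset.sum_congr rfl fun c1 _ => Finset.sum_congr rfl fun c2 _ => ?_
  congr 1
  simp only [unfold1, Matrix.of_apply, Finset.sum_mul]
  refine Finset.sum_congr rfl fun i _ => ?_
  refine Finset.sum_congr rfl fun j _ => ?_
  refine Finset.sum_congr rfl fun k _ => ?_
  ring

lemma projNormSq3_eq_y {m₁ m₂ m₃ p q r : ℕ} (τ : Fin m₁ → Fin m₂ → Fin m₃ → ℝ)
    (x : Fin p → Fin m₁ → ℝ) (y : Fin q → Fin m₂ → ℝ) (z : Fin r → Fin m₃ → ℝ) :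
    projNormSq3 τ x y z = ∑ m, y m ⬝ᵥ
      (unfold1 (fun j i k => τ i j k) x z * (unfold1 (fun j i k => τ i j k) x z)ᵀ).mulVec (y m) := by
  simp only [dot_AAt]
  rw [projNormSq3, Finset.sum_comm]
  refine Finset.sum_congr rfl fun m _ => ?_
  conv_rhs => rw [Fintype.sum_prod_type]
  refine Finset.sum_congr rfl fun c1 _ => Finset.sum_congr rfl fun c2 _ => ?_
  congr 1
  simp only [unfold1, Matrix.of_apply, Finset.sum_mul]
  rw [Finset.sum_comm]
  refine Finset.sum_congr rfl fun j _ => ?_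
  refine Finset.sum_congr rfl fun i _ => ?_
  refine Finset.sum_congr rfl fun k _ => ?_
  ring

lemma projNormSq3_eq_z {m₁ m₂ m₃ p q r : ℕ} (τ : Fin m₁ → Fin m₂ → Fin m₃ → ℝ)
    (x : Fin p → Fin m₁ → ℝ) (y : Fin q → Fin m₂ → ℝ) (z : Fin r → Fin m₃ → ℝ) :
    projNormSq3 τ x y z = ∑ n, z n ⬝ᵥ
      (unfold1 (fun k i j => τ i j k) x y * (unfold1 (fun k i j => τ i j k) x y)ᵀ).mulVec (z n) := by
  simp only [dot_AAt]
  rw [projNormSq3, swap3]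
  refine Finset.sum_congr rfl fun nn _ => ?_
  conv_rhs => rw [Fintype.sum_prod_type]
  refine Finset.sum_congr rfl fun c1 _ => Finset.sum_congr rfl fun c2 _ => ?_
  congr 1
  simp only [unfold1, Matrix.of_apply, Finset.sum_mul]
  rw [swap3 (fun i j k => τ i j k * x c1 i * y c2 j * z nn k)]

/-- One sweep of the relaxation algorithm does not decrease the objective
`‖P_{X⊗Y⊗Z}(τ)‖²`: if `x'` spans the top `p` left singular vectors of `τ(Y,Z)`,
`y'` those of `τ(X',Z)` and `z'` those of `τ(X',Y')`, then
`‖P_{X⊗Y⊗Z}τ‖² ≤ ‖P_{X'⊗Y⊗Z}τ‖² ≤ ‖P_{X'⊗Y'⊗Z}τ‖² ≤ ‖P_{X'⊗Y'⊗Z'}τ‖²`. -/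
theorem relaxation_sweep_monotone (m₁ m₂ m₃ p q r : ℕ)
    (τ : Fin m₁ → Fin m₂ → Fin m₃ → ℝ)
    (x : Fin p → Fin m₁ → ℝ) (hx : IsOrthonormalFrame x)
    (y : Fin q → Fin m₂ → ℝ) (hy : IsOrthonormalFrame y)
    (z : Fin r → Fin m₃ → ℝ) (hz : IsOrthonormalFrame z)
    (x' : Fin p → Fin m₁ → ℝ) (μ₁ : Fin p → ℝ)
    (hx' : IsTopSingularFrame (unfold1 τ y z) x' μ₁)
    (y' : Fin q → Fin m₂ → ℝ) (μ₂ : Fin q → ℝ)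
    (hy' : IsTopSingularFrame (unfold1 (fun j i k => τ i j k) x' z) y' μ₂)
    (z' : Fin r → Fin m₃ → ℝ) (μ₃ : Fin r → ℝ)
    (hz' : IsTopSingularFrame (unfold1 (fun k i j => τ i j k) x' y') z' μ₃) :
    projNormSq3 τ x y z ≤ projNormSq3 τ x' y z ∧
    projNormSq3 τ x' y z ≤ projNormSq3 τ x' y' z ∧
    projNormSq3 τ x' y' z ≤ projNormSq3 τ x' y' z' := by
  refine ⟨?_, ?_, ?_⟩
  · rw [projNormSq3_eq_x τ x y z, projNormSq3_eq_x τ x' y z]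
    calc ∑ l, x l ⬝ᵥ (unfold1 τ y z * (unfold1 τ y z)ᵀ).mulVec (x l)
        ≤ ∑ l, μ₁ l := sum_rayleigh_le _ hx hx'
      _ = _ := (sum_eig hx').symm
  · rw [projNormSq3_eq_y τ x' y z, projNormSq3_eq_y τ x' y' z]
    calc ∑ m, y m ⬝ᵥ (unfold1 (fun j i k => τ i j k) x' z *
          (unfold1 (fun j i k => τ i j k) x' z)ᵀ).mulVec (y m)
        ≤ ∑ m, μ₂ m := sum_rayleigh_le _ hy hy'
      _ = _ := (sum_eig hy').symm
  · rw [projNormSq3_eq_z τ x' y' z, projNormSq3_eq_z τ x' y' z']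
    calc ∑ n, z n ⬝ᵥ (unfold1 (fun k i j => τ i j k) x' y' *
          (unfold1 (fun k i j => τ i j k) x' y')ᵀ).mulVec (z n)
        ≤ ∑ n, μ₃ n := sum_rayleigh_le _ hz hz'
      _ = _ := (sum_eig hz').symm
end
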